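/- arXiv:1512.03717 — 9 statements merged into one kernel-verified Lean document; each statement's English description precedes it below -/
import Mathlib

section
/- Let Y be a metric space and Z a normed linear space. Given a function f : Y → Z and a sequence of continuous functions h_n : Y → Z, there exist continuous functions h̃_n : Y → Z such that: (a) h̃_n(y) → f(y) whenever y ∈ Y and h_n(y) → f(y); (b) h̃_n(y) → f(y) whenever y ∈ Y and f is continuous at y; and (c) the pair ({h̃_n}, f) has UCPC. -/
open Filter Topology

/-- The pair `({h n}, f)` has the property of uniform convergence at points of
continuity (UCPC): for every point `y₀` where `f` is continuous and every
`ε > 0` there are `k₀ ∈ ℕ` and a neighborhood `U` of `y₀` such that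
`‖h k y - f y₀‖ < ε` for every `k ≥ k₀` and `y ∈ U`. -/
def UCPC {Y Z : Type*} [TopologicalSpace Y] [NormedAddCommGroup Z]
    (h : ℕ → Y → Z) (f : Y → Z) : Prop :=
  ∀ y₀, ContinuousAt f y₀ → ∀ ε > (0 : ℝ), ∃ k₀ : ℕ, ∃ U ∈ nhds y₀,
    ∀ k ≥ k₀, ∀ y ∈ U, ‖h k y - f y₀‖ < ε

section Aux

variable {Y : Type*} {Z : Type*}

/-- Clamp a vector `v` to the closed ball of radius `c` (for `c > 0`). -/
noncomputable def clampTo [NormedAddCommGroup Z] [NormedSpace ℝ Z] (c : ℝ) (v : Z) : Z :=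
  (c / max c ‖v‖) • v

lemma clampTo_of_le [NormedAddCommGroup Z] [NormedSpace ℝ Z] {c : ℝ} {v : Z}
    (hc : 0 < c) (h : ‖v‖ ≤ c) : clampTo c v = v := by
  rw [clampTo, max_eq_left h, div_self hc.ne', one_smul]

lemma norm_clampTo_le [NormedAddCommGroup Z] [NormedSpace ℝ Z] {c : ℝ} (v : Z)
    (hc : 0 < c) : ‖clampTo c v‖ ≤ c := by
  have hmax : 0 < max c ‖v‖ := lt_max_of_lt_left hc
  rw [clampTo, norm_smul, Real.norm_of_nonneg (by positivity)]
  calc c / max c ‖v‖ * ‖v‖ ≤ c / max c ‖v‖ * max c ‖v‖ := by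
        apply mul_le_mul_of_nonneg_left (le_max_right _ _) (by positivity)
    _ = c := by field_simp

lemma continuous_clampTo [NormedAddCommGroup Z] [NormedSpace ℝ Z] [TopologicalSpace Y]
    {C : Y → ℝ} {V : Y → Z} (hC : Continuous C) (hV : Continuous V)
    (hpos : ∀ y, 0 < C y) : Continuous fun y => clampTo (C y) (V y) := by
  apply Continuous.smul _ hV
  exact hC.div (hC.max hV.norm) fun y => (lt_max_of_lt_left (hpos y)).ne'

/-- Minimum of `t 0 y, …, t n y`. -/
noncomputable def minUpTo (t : ℕ → Y → ℝ) : ℕ → Y → ℝ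
  | 0 => t 0
  | n + 1 => fun y => min (minUpTo t n y) (t (n + 1) y)

lemma minUpTo_le (t : ℕ → Y → ℝ) : ∀ {n m : ℕ}, m ≤ n → ∀ y, minUpTo t n y ≤ t m y := by
  intro n
  induction n with
  | zero => intro m hm y; interval_cases m; exact le_rfl
  | succ n ih =>
    intro m hm y
    rcases Nat.lt_or_ge m (n + 1) with hlt | hge
    · exact le_trans (min_le_left _ _) (ih (Nat.lt_succ_iff.mp hlt) y)
    · have hmn : m = n + 1 := le_antisymm hm hge
      subst hmn
      exact min_le_right _ _

lemma le_minUpTo (t : ℕ → Y → ℝ) {n : ℕ} {b : ℝ} {y : Y}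
    (hb : ∀ m ≤ n, b ≤ t m y) : b ≤ minUpTo t n y := by
  induction n with
  | zero => exact hb 0 le_rfl
  | succ n ih =>
    exact le_min (ih fun m hm => hb m (hm.trans (Nat.le_succ n))) (hb (n + 1) le_rfl)

lemma continuous_minUpTo [TopologicalSpace Y] (t : ℕ → Y → ℝ)
    (ht : ∀ m, Continuous (t m)) : ∀ n, Continuous (minUpTo t n)
  | 0 => ht 0
  | n + 1 => (continuous_minUpTo t ht n).min (ht (n + 1))

end Aux

set_option maxHeartbeats 2000000 in
/-- Given a function `f` and a sequence of continuous functions `h n`, there is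
a sequence of continuous functions `h̃ n` converging to `f` wherever `h n` does
and wherever `f` is continuous, such that `({h̃ n}, f)` has UCPC. -/
theorem exists_continuous_seq_UCPC {Y Z : Type*}
    [MetricSpace Y] [NormedAddCommGroup Z] [NormedSpace ℝ Z]
    (f : Y → Z) (h : ℕ → Y → Z) (hcont : ∀ n, Continuous (h n)) :
    ∃ h' : ℕ → Y → Z,
      (∀ n, Continuous (h' n)) ∧
      (∀ y, Tendsto (fun n => h n y) atTop (nhds (f y)) →
        Tendsto (fun n => h' n y) atTop (nhds (f y))) ∧
      (∀ y, ContinuousAt f y → Tendsto (fun n => h' n y) atTop (nhds (f y))) ∧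
      UCPC h' f := by
  classical
  -- Step 1: partitions of unity at scale 1/(n+1).
  have hPex : ∀ n : ℕ, ∃ P : PartitionOfUnity Y Y Set.univ,
      P.IsSubordinate fun c => Metric.ball c (1 / ((n : ℝ) + 1)) := by
    intro n
    apply PartitionOfUnity.exists_isSubordinate isClosed_univ
      (fun c => Metric.ball c (1 / ((n : ℝ) + 1))) (fun c => Metric.isOpen_ball)
    intro y _
    exact Set.mem_iUnion.2 ⟨y, Metric.mem_ball_self (by positivity)⟩
  choose P hPsub using hPex
  -- Averaged approximations of f.
  set g : ℕ → Y → Z := fun n y => ∑ᶠ c, P n c y • f c with hg_def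
  have gc : ∀ n, Continuous (g n) := by
    intro n
    exact (P n).continuous_finsum_smul (g := fun c _ => f c) fun i x _ => continuousAt_const
  -- Error bound for g.
  have gb : ∀ (n : ℕ) (y : Y) (v : Z) (B : ℝ),
      (∀ c, dist c y < 1 / ((n : ℝ) + 1) → ‖f c - v‖ ≤ B) → ‖g n y - v‖ ≤ B := by
    intro n y v B hB
    set s := ((P n).locallyFinite.point_finite y).toFinset with hs_def
    have hsupp : (Function.support fun c => P n c y) ⊆ ↑s := by
      intro c hc
      rw [Function.mem_support] at hc
      simp only [hs_def, Set.Finite.coe_toFinset, Set.mem_setOf_eq]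
      exact hc
    have h1 : ∑ c ∈ s, P n c y = 1 := by
      rw [← finsum_eq_sum_of_support_subset _ hsupp]
      exact (P n).sum_eq_one (Set.mem_univ y)
    have h2 : g n y = ∑ c ∈ s, P n c y • f c := by
      apply finsum_eq_sum_of_support_subset
      intro c hc
      refine hsupp ?_
      rw [Function.mem_support]
      intro hc0
      rw [Function.mem_support] at hc
      exact hc (by rw [hc0, zero_smul])
    have h3 : g n y - v = ∑ c ∈ s, P n c y • (f c - v) := by
      simp only [smul_sub, Finset.sum_sub_distrib, ← Finset.sum_smul, h1, one_smul, h2]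
    have hdist : ∀ c, P n c y ≠ 0 → dist c y < 1 / ((n : ℝ) + 1) := by
      intro c hc0
      have hmem : y ∈ tsupport ⇑(P n c) := subset_tsupport _ hc0
      have hmem2 := hPsub n c hmem
      rw [Metric.mem_ball] at hmem2
      rwa [dist_comm]
    calc ‖g n y - v‖ = ‖∑ c ∈ s, P n c y • (f c - v)‖ := by rw [h3]
      _ ≤ ∑ c ∈ s, ‖P n c y • (f c - v)‖ := norm_sum_le _ _
      _ ≤ ∑ c ∈ s, P n c y * B := by
          apply Finset.sum_le_sum
          intro c _
          rw [norm_smul, Real.norm_of_nonneg ((P n).nonneg c y)]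
          by_cases hc0 : P n c y = 0
          · simp [hc0]
          · exact mul_le_mul_of_nonneg_left (hB c (hdist c hc0)) ((P n).nonneg c y)
      _ = B := by rw [← Finset.sum_mul, h1, one_mul]
  -- Oscillation sets.
  set Om : ℕ → Set Y := fun m =>
    {y | ∃ r > 0, ∀ a ∈ Metric.ball y r, ∀ b ∈ Metric.ball y r,
      ‖f a - f b‖ < 1 / ((m : ℝ) + 1)} with hOm_def
  have Om_anti : ∀ {m k : ℕ}, m ≤ k → Om k ⊆ Om m := by
    intro m k hmk y hy
    obtain ⟨r, hr, H⟩ := hy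
    refine ⟨r, hr, fun a ha b hb => lt_of_lt_of_le (H a ha b hb) ?_⟩
    apply one_div_le_one_div_of_le (by positivity)
    exact_mod_cast Nat.add_le_add_right hmk 1
  -- Continuity at a point gives small balls.
  have cAt : ∀ y, ContinuousAt f y → ∀ ε > (0 : ℝ), ∃ r > (0 : ℝ),
      ∀ a ∈ Metric.ball y r, ‖f a - f y‖ < ε := by
    intro y hy ε hε
    rw [Metric.continuousAt_iff] at hy
    obtain ⟨δ, hδ, H⟩ := hy ε hε
    refine ⟨δ, hδ, fun a ha => ?_⟩
    have := H (Metric.mem_ball.mp ha)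
    rwa [dist_eq_norm] at this
  -- Small balls give membership in Om (of a whole ball).
  have bso : ∀ (m : ℕ) (y : Y) (r : ℝ), 0 < r →
      (∀ a ∈ Metric.ball y r, ‖f a - f y‖ < 1 / (2 * ((m : ℝ) + 1))) →
      Metric.ball y (r / 2) ⊆ Om m := by
    intro m y r hr H x hx
    refine ⟨r / 2, by positivity, fun a ha b hb => ?_⟩
    have hsub : Metric.ball x (r / 2) ⊆ Metric.ball y r := by
      apply Metric.ball_subset_ball'
      have := Metric.mem_ball.mp hx
      linarith
    calc ‖f a - f b‖ ≤ ‖f a - f y‖ + ‖f y - f b‖ := norm_sub_le_norm_sub_add_norm_sub _ _ _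
      _ < 1 / (2 * ((m : ℝ) + 1)) + 1 / (2 * ((m : ℝ) + 1)) := by
          have h1 := H a (hsub ha)
          have h2 := H b (hsub hb)
          rw [← norm_neg (f y - f b), neg_sub]
          linarith
      _ = 1 / ((m : ℝ) + 1) := by
          rw [← add_div, div_eq_div_iff (by positivity) (by positivity)]
          ring
  -- infDist lower bound.
  have idb : ∀ (m : ℕ) (x : Y) (r : ℝ), 0 < r → Metric.ball x r ⊆ Om m →
      ((Om m)ᶜ : Set Y).Nonempty → r ≤ Metric.infDist x (Om m)ᶜ := by
    intro m x r hr hsub hne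
    by_contra hlt
    push_neg at hlt
    obtain ⟨z, hz, hdz⟩ := (Metric.infDist_lt_iff hne).mp hlt
    exact hz (hsub (by rwa [Metric.mem_ball, dist_comm]))
  -- The clamp radius.
  set term : ℕ → ℕ → Y → ℝ := fun n m y =>
    3 / ((m : ℝ) + 1) +
      (if ((Om m)ᶜ : Set Y).Nonempty then
        ((n : ℝ) + 1 + ‖h n y - g n y‖) *
          max 0 (1 - ((n : ℝ) + 1) * Metric.infDist y (Om m)ᶜ)
      else 0) with hterm_def
  have term_ge : ∀ (n m : ℕ) (y : Y), 3 / ((m : ℝ) + 1) ≤ term n m y := by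
    intro n m y
    have hnn : (0 : ℝ) ≤ (if ((Om m)ᶜ : Set Y).Nonempty then
        ((n : ℝ) + 1 + ‖h n y - g n y‖) *
          max 0 (1 - ((n : ℝ) + 1) * Metric.infDist y (Om m)ᶜ) else 0) := by
      split
      · exact mul_nonneg (by positivity) (le_max_left _ _)
      · exact le_rfl
    simp only [hterm_def]
    linarith
  -- term when y is in the complement of Om m.
  have term_compl : ∀ (n m : ℕ) (y : Y), y ∈ ((Om m)ᶜ : Set Y) → ‖h n y - g n y‖ ≤ term n m y := by
    intro n m y hyc
    simp only [hterm_def]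
    rw [if_pos ⟨y, hyc⟩, Metric.infDist_zero_of_mem hyc, mul_zero, sub_zero,
      max_eq_right (by norm_num : (0 : ℝ) ≤ 1), mul_one]
    have h3 : (0 : ℝ) ≤ 3 / ((m : ℝ) + 1) := by positivity
    have h4 : (0 : ℝ) ≤ (n : ℝ) + 1 := by positivity
    linarith
  -- term when y is well inside Om m.
  have term_inside : ∀ (n m : ℕ) (y : Y) (ρ : ℝ), 0 < ρ → Metric.ball y ρ ⊆ Om m →
      (1 : ℝ) ≤ ((n : ℝ) + 1) * ρ → term n m y = 3 / ((m : ℝ) + 1) := by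
    intro n m y ρ hρ hsub hnρ
    simp only [hterm_def]
    split
    case isTrue hne =>
      have hid : ρ ≤ Metric.infDist y (Om m)ᶜ := idb m y ρ hρ hsub hne
      have hmax : max 0 (1 - ((n : ℝ) + 1) * Metric.infDist y (Om m)ᶜ) = 0 := by
        apply max_eq_left
        have h2 : ((n : ℝ) + 1) * ρ ≤ ((n : ℝ) + 1) * Metric.infDist y (Om m)ᶜ :=
          mul_le_mul_of_nonneg_left hid (by positivity)
        linarith
      rw [hmax, mul_zero, add_zero]
    case isFalse => rw [add_zero]
  have term_cont : ∀ n m, Continuous (term n m) := by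
    intro n m
    simp only [hterm_def]
    apply continuous_const.add
    split
    · exact ((continuous_const.add ((hcont n).sub (gc n)).norm).mul
        (continuous_const.max (continuous_const.sub
          (continuous_const.mul (Metric.continuous_infDist_pt _)))))
    · exact continuous_const
  set cR : ℕ → Y → ℝ := fun n => minUpTo (term n) n with hcR_def
  have cR_le_term : ∀ (n m : ℕ) (y : Y), m ≤ n → cR n y ≤ term n m y := fun n m y hm =>
    minUpTo_le (term n) hm y
  have cR_pos : ∀ n y, 0 < cR n y := by
    intro n y
    have h1 : (0 : ℝ) < 3 / ((n : ℝ) + 1) := by positivity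
    refine lt_of_lt_of_le h1 (le_minUpTo _ fun m hm => le_trans ?_ (term_ge n m y))
    apply div_le_div_of_nonneg_left (by norm_num) (by positivity)
    exact_mod_cast Nat.add_le_add_right hm 1
  have cR_cont : ∀ n, Continuous (cR n) := fun n => continuous_minUpTo _ (term_cont n) n
  -- The modified sequence.
  set h' : ℕ → Y → Z := fun n y => g n y + clampTo (cR n y) (h n y - g n y) with hh'_def
  have h'_cont : ∀ n, Continuous (h' n) := by
    intro n
    exact (gc n).add (continuous_clampTo (cR_cont n) ((hcont n).sub (gc n)) (cR_pos n))
  have h'_eq_h : ∀ n y, ‖h n y - g n y‖ ≤ cR n y → h' n y = h n y := by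
    intro n y hle
    simp only [hh'_def]
    rw [clampTo_of_le (cR_pos n y) hle]
    abel
  have h'_close_g : ∀ n y, ‖h' n y - g n y‖ ≤ cR n y := by
    intro n y
    have heq : h' n y - g n y = clampTo (cR n y) (h n y - g n y) := by
      simp only [hh'_def]; abel
    rw [heq]
    exact norm_clampTo_le _ (cR_pos n y)
  -- Property (b): convergence at continuity points.
  have hb : ∀ y, ContinuousAt f y → Tendsto (fun n => h' n y) atTop (nhds (f y)) := by
    intro y hy
    rw [NormedAddCommGroup.tendsto_atTop]
    intro ε hε
    obtain ⟨m, hm⟩ := exists_nat_one_div_lt (show (0 : ℝ) < ε / 6 by linarith)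
    obtain ⟨r₁, hr₁, H₁⟩ := cAt y hy (1 / (2 * ((m : ℝ) + 1))) (by positivity)
    have hball : Metric.ball y (r₁ / 2) ⊆ Om m := bso m y r₁ hr₁ H₁
    obtain ⟨r₂, hr₂, H₂⟩ := cAt y hy (ε / 3) (by linarith)
    refine ⟨max m (max ⌈2 / (r₁ / 2)⌉₊ ⌈1 / r₂⌉₊), fun n hn => ?_⟩
    have hnm : m ≤ n := le_trans (le_max_left _ _) hn
    have hn1 : (2 / (r₁ / 2) : ℝ) ≤ n :=
      Nat.ceil_le.mp (le_trans (le_trans (le_max_left _ _) (le_max_right m _)) hn)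
    have hn2 : (1 / r₂ : ℝ) ≤ n :=
      Nat.ceil_le.mp (le_trans (le_trans (le_max_right _ _) (le_max_right m _)) hn)
    have hgb : ‖g n y - f y‖ ≤ ε / 3 := by
      apply gb
      intro c hc
      refine (H₂ c ?_).le
      rw [Metric.mem_ball]
      have hle : 1 / ((n : ℝ) + 1) ≤ r₂ := by
        rw [div_le_iff₀ (by positivity)]
        rw [div_le_iff₀ hr₂] at hn2
        nlinarith
      linarith
    have hterm : term n m y = 3 / ((m : ℝ) + 1) := by
      apply term_inside n m y (r₁ / 2) (by linarith) hball
      rw [div_le_iff₀ (by linarith)] at hn1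
      nlinarith
    have hcRlt : cR n y < ε / 2 := by
      have hle := (cR_le_term n m y hnm).trans hterm.le
      have h31 : (3 : ℝ) / ((m : ℝ) + 1) = 3 * (1 / ((m : ℝ) + 1)) := by ring
      rw [h31] at hle
      nlinarith
    calc ‖h' n y - f y‖ ≤ ‖h' n y - g n y‖ + ‖g n y - f y‖ :=
          norm_sub_le_norm_sub_add_norm_sub _ _ _
      _ ≤ cR n y + ε / 3 := add_le_add (h'_close_g n y) hgb
      _ < ε := by linarith
  -- Property (a).
  have ha : ∀ y, Tendsto (fun n => h n y) atTop (nhds (f y)) →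
      Tendsto (fun n => h' n y) atTop (nhds (f y)) := by
    intro y hy
    by_cases hc : ∀ m, y ∈ Om m
    · -- f is continuous at y.
      apply hb
      rw [Metric.continuousAt_iff]
      intro ε hε
      obtain ⟨m, hm⟩ := exists_nat_one_div_lt hε
      obtain ⟨r, hr, H⟩ := hc m
      refine ⟨r, hr, fun {a} ha' => ?_⟩
      rw [dist_eq_norm]
      exact lt_trans (H a (by rwa [Metric.mem_ball]) y (Metric.mem_ball_self hr)) hm
    · push_neg at hc
      have hfind : ∃ m, y ∉ Om m := hc
      rcases Nat.eq_zero_or_pos (Nat.find hfind) with hk0 | hkpos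
      · -- y is outside every Om; no clamping ever happens at y.
        have hnotOm : ∀ m, y ∉ Om m := by
          intro m hmem
          exact Nat.find_spec hfind (Om_anti (hk0 ▸ Nat.zero_le m) hmem)
        have hall : ∀ n, h' n y = h n y := by
          intro n
          apply h'_eq_h
          exact le_minUpTo _ fun m _ => term_compl n m y (hnotOm m)
        exact Tendsto.congr (fun n => (hall n).symm) hy
      · obtain ⟨m₀, hm₀⟩ : ∃ m₀, Nat.find hfind = m₀ + 1 :=
          ⟨Nat.find hfind - 1, by omega⟩
        have hknot : y ∉ Om (m₀ + 1) := hm₀ ▸ Nat.find_spec hfind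
        have hyOm : y ∈ Om m₀ := of_not_not (Nat.find_min hfind (by omega))
        have hnotOm : ∀ m, m₀ + 1 ≤ m → y ∉ Om m := fun m hm hmem =>
          hknot (Om_anti hm hmem)
        obtain ⟨r, hr, H⟩ := hyOm
        have hy' := NormedAddCommGroup.tendsto_atTop.mp hy
        obtain ⟨N₁, hN₁⟩ := hy' (1 / ((m₀ : ℝ) + 1)) (by positivity)
        have hev : ∀ n ≥ max N₁ ⌈1 / r⌉₊, h' n y = h n y := by
          intro n hn
          have hn1 : ‖h n y - f y‖ < 1 / ((m₀ : ℝ) + 1) :=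
            hN₁ n (le_trans (le_max_left _ _) hn)
          have hn2 : (1 / r : ℝ) ≤ n := Nat.ceil_le.mp (le_trans (le_max_right _ _) hn)
          have hgclose : ‖g n y - f y‖ ≤ 1 / ((m₀ : ℝ) + 1) := by
            apply gb
            intro c hcd
            refine (H c ?_ y (Metric.mem_ball_self hr)).le
            rw [Metric.mem_ball]
            have hle : 1 / ((n : ℝ) + 1) ≤ r := by
              rw [div_le_iff₀ (by positivity)]
              rw [div_le_iff₀ hr] at hn2
              nlinarith
            linarith
          have hhg : ‖h n y - g n y‖ ≤ 2 / ((m₀ : ℝ) + 1) := by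
            calc ‖h n y - g n y‖ ≤ ‖h n y - f y‖ + ‖f y - g n y‖ :=
                  norm_sub_le_norm_sub_add_norm_sub _ _ _
              _ ≤ 1 / ((m₀ : ℝ) + 1) + 1 / ((m₀ : ℝ) + 1) := by
                  rw [← norm_neg (f y - g n y), neg_sub]
                  exact add_le_add hn1.le hgclose
              _ = 2 / ((m₀ : ℝ) + 1) := by ring
          apply h'_eq_h
          apply le_minUpTo
          intro m hm
          rcases Nat.lt_or_ge m (m₀ + 1) with hmlt | hmge
          · refine le_trans (le_trans hhg ?_) (term_ge n m y)
            have hm1 : ((m : ℝ) + 1) ≤ ((m₀ : ℝ) + 1) := by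
              exact_mod_cast Nat.add_le_add_right (Nat.lt_succ_iff.mp hmlt) 1
            rw [div_le_div_iff₀ (by positivity) (by positivity : (0:ℝ) < (m : ℝ) + 1)]
            nlinarith
          · exact term_compl n m y (hnotOm m hmge)
        refine Tendsto.congr' ?_ hy
        filter_upwards [eventually_ge_atTop (max N₁ ⌈1 / r⌉₊)] with n hn
        exact (hev n hn).symm
  -- Property (c): UCPC.
  have hucpc : UCPC h' f := by
    intro y₀ hy₀ ε hε
    obtain ⟨m, hm⟩ := exists_nat_one_div_lt (show (0 : ℝ) < ε / 5 by linarith)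
    obtain ⟨r, hr, H⟩ := cAt y₀ hy₀ (min (ε / 5) (1 / (2 * ((m : ℝ) + 1))))
      (by positivity)
    have hball : Metric.ball y₀ (r / 2) ⊆ Om m :=
      bso m y₀ r hr fun a ha => lt_of_lt_of_le (H a ha) (min_le_right _ _)
    refine ⟨max m ⌈4 / r⌉₊, Metric.ball y₀ (r / 4),
      Metric.ball_mem_nhds _ (by positivity), ?_⟩
    intro k hk y hyU
    have hkm : m ≤ k := le_trans (le_max_left _ _) hk
    have hk4 : (4 / r : ℝ) ≤ k := Nat.ceil_le.mp (le_trans (le_max_right _ _) hk)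
    have hyd : dist y y₀ < r / 4 := Metric.mem_ball.mp hyU
    have hsub : Metric.ball y (r / 4) ⊆ Om m := by
      intro x hx
      apply hball
      rw [Metric.mem_ball] at hx ⊢
      calc dist x y₀ ≤ dist x y + dist y y₀ := dist_triangle _ _ _
        _ < r / 2 := by linarith
    have hterm : term k m y = 3 / ((m : ℝ) + 1) := by
      apply term_inside k m y (r / 4) (by linarith) hsub
      rw [div_le_iff₀ hr] at hk4
      nlinarith
    have hcRle : cR k y ≤ 3 / ((m : ℝ) + 1) := (cR_le_term k m y hkm).trans hterm.le
    have hgb : ‖g k y - f y₀‖ ≤ ε / 5 := by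
      apply gb
      intro c hcd
      refine le_trans (le_of_lt (H c ?_)) (min_le_left _ _)
      rw [Metric.mem_ball]
      have hle : 1 / ((k : ℝ) + 1) ≤ r / 4 := by
        rw [div_le_iff₀ (by positivity)]
        rw [div_le_iff₀ hr] at hk4
        nlinarith
      calc dist c y₀ ≤ dist c y + dist y y₀ := dist_triangle _ _ _
        _ < r := by linarith
    have h3e : (3 : ℝ) / ((m : ℝ) + 1) < 3 * (ε / 5) := by
      have h31 : (3 : ℝ) / ((m : ℝ) + 1) = 3 * (1 / ((m : ℝ) + 1)) := by ring
      rw [h31]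
      nlinarith
    calc ‖h' k y - f y₀‖ ≤ ‖h' k y - g k y‖ + ‖g k y - f y₀‖ :=
          norm_sub_le_norm_sub_add_norm_sub _ _ _
      _ ≤ cR k y + ε / 5 := add_le_add (h'_close_g k y) hgb
      _ ≤ 3 / ((m : ℝ) + 1) + ε / 5 := by linarith
      _ < ε := by linarith
  exact ⟨h', h'_cont, ha, hb, hucpc⟩
end

section
/- Let Y be a metric space and Z a normed linear space. Given a function f : Y → Z and a sequence of continuous functions h_n : Y → Z, there exist continuous functions h̃_n : Y → Z such that h̃_n(y) → f(y) whenever y ∈ Y and h_n(y) → f(y), and also h̃_n(y) → f(y) whenever y ∈ Y and f is continuous at y. -/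
open Filter Topology Metric Set


lemma lemA {Y Z : Type*} [MetricSpace Y] [NormedAddCommGroup Z] [NormedSpace ℝ Z]
    (f : Y → Z) (ε : ℝ) (hε : 0 < ε) (F : Set Y) (hF : IsClosed F)
    (H : ∀ y ∈ F, ∃ δ > 0, ∀ x₁ ∈ ball y δ, ∀ x₂ ∈ ball y δ, ‖f x₁ - f x₂‖ ≤ ε) :
    ∃ G : Y → Z, Continuous G ∧ ∀ y ∈ F, ‖G y - f y‖ ≤ ε := by
  classical
  choose! δ hδpos hδ using H
  set U : Option F → Set Y := fun i => Option.elim i Fᶜ (fun c => ball c.1 (δ c.1)) with hU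
  have hUo : ∀ i, IsOpen (U i) := by
    rintro (_|c)
    · exact hF.isOpen_compl
    · exact isOpen_ball
  have hUc : (univ : Set Y) ⊆ ⋃ i, U i := by
    intro y _
    by_cases hy : y ∈ F
    · exact mem_iUnion.2 ⟨some ⟨y, hy⟩, mem_ball_self (hδpos y hy)⟩
    · exact mem_iUnion.2 ⟨none, hy⟩
  obtain ⟨ρ, hρ⟩ := PartitionOfUnity.exists_isSubordinate isClosed_univ U hUo hUc
  set v : Option F → Z := fun i => Option.elim i 0 (fun c => f c.1) with hv
  refine ⟨fun y => ∑ᶠ i, ρ i y • v i, ?_, ?_⟩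
  · exact ρ.continuous_finsum_smul (fun i x _ => continuousAt_const)
  · intro y hy
    have hfin : {i | y ∈ Function.support (ρ i)}.Finite := ρ.locallyFinite.point_finite y
    set s : Finset (Option F) := hfin.toFinset with hs
    have hsupp : ∀ g : Option F → Z, (Function.support fun i => ρ i y • g i) ⊆ s := by
      intro g i hi
      have h0 : ρ i y ≠ 0 := fun h0 => hi (by simp [h0])
      simpa [hs, Set.Finite.mem_toFinset, Function.mem_support] using h0
    have hsupp0 : Function.support (fun i => ρ i y) ⊆ s := by
      intro i hi
      simpa [hs, Set.Finite.mem_toFinset, Function.mem_support] using hi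
    have hsum1 : ∑ i ∈ s, ρ i y = 1 := by
      rw [← finsum_eq_sum_of_support_subset _ hsupp0]
      exact ρ.sum_eq_one (mem_univ y)
    have hGy : (∑ᶠ i, ρ i y • v i) = ∑ i ∈ s, ρ i y • v i :=
      finsum_eq_sum_of_support_subset _ (hsupp v)
    simp only []
    rw [hGy]
    have key : (∑ i ∈ s, ρ i y • v i) - f y = ∑ i ∈ s, ρ i y • (v i - f y) := by
      simp only [smul_sub, Finset.sum_sub_distrib, ← Finset.sum_smul, hsum1, one_smul]
    rw [key]
    calc ‖∑ i ∈ s, ρ i y • (v i - f y)‖ ≤ ∑ i ∈ s, ρ i y * ε := by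
            refine norm_sum_le_of_le s (fun i hi => ?_)
            rw [norm_smul, Real.norm_of_nonneg (ρ.nonneg i y)]
            refine mul_le_mul_of_nonneg_left ?_ (ρ.nonneg i y)
            have hiy : y ∈ Function.support (ρ i) := by
              simpa [hs, Set.Finite.mem_toFinset] using hi
            have hiU : y ∈ U i := hρ i (subset_tsupport _ hiy)
            match i with
            | none => exact absurd hy hiU
            | some c =>
              have : ‖f c.1 - f y‖ ≤ ε :=
                hδ c.1 c.2 c.1 (mem_ball_self (hδpos c.1 c.2)) y hiU
              simpa [hv] using this
      _ = ε := by rw [← Finset.sum_mul, hsum1, one_mul]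

namespace ExCCP

variable {Y Z : Type*} [MetricSpace Y] [NormedAddCommGroup Z] [NormedSpace ℝ Z]

/-- radial clamp to the closed ball of radius `r` around the origin -/
noncomputable def pull (r : ℝ) (v : Z) : Z := min 1 (r / ‖v‖) • v

lemma pull_eq_self {r : ℝ} {v : Z} (hv : ‖v‖ ≤ r) : pull r v = v := by
  rcases eq_or_ne v 0 with rfl | hv0
  · simp [pull]
  · have hn : 0 < ‖v‖ := norm_pos_iff.2 hv0
    have : (1:ℝ) ≤ r / ‖v‖ := (one_le_div hn).2 hv
    simp [pull, min_eq_left this]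

lemma norm_pull_le {r : ℝ} (hr : 0 ≤ r) (v : Z) : ‖pull r v‖ ≤ r := by
  rcases eq_or_ne v 0 with rfl | hv0
  · simpa [pull] using hr
  · have hn : 0 < ‖v‖ := norm_pos_iff.2 hv0
    have h1 : (0:ℝ) ≤ min 1 (r / ‖v‖) := le_min zero_le_one (div_nonneg hr hn.le)
    rw [pull, norm_smul, Real.norm_of_nonneg h1]
    calc min 1 (r / ‖v‖) * ‖v‖ ≤ (r / ‖v‖) * ‖v‖ :=
          mul_le_mul_of_nonneg_right (min_le_right _ _) hn.le
      _ = r := div_mul_cancel₀ r hn.ne'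

lemma continuous_pull {r : ℝ} (hr : 0 < r) : Continuous (pull r : Z → Z) := by
  rw [continuous_iff_continuousAt]
  intro v
  rcases lt_or_ge ‖v‖ r with hv | hv
  · have hev : ∀ᶠ w in 𝓝 v, pull r w = w := by
      have : IsOpen {w : Z | ‖w‖ < r} := isOpen_lt continuous_norm continuous_const
      filter_upwards [this.mem_nhds hv] with w hw
      exact pull_eq_self hw.le
    exact continuousAt_id.congr (hev.mono fun w hw => hw.symm)
  · have hv0 : v ≠ 0 := by
      intro h; rw [h] at hv; simp at hv; exact absurd hv (not_le.2 hr)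
    have hn : ‖v‖ ≠ 0 := norm_ne_zero_iff.2 hv0
    exact ((continuousAt_const.min (continuousAt_const.div
      continuous_norm.continuousAt hn)).smul continuousAt_id)

variable (f : Y → Z)

/-- set of points near which `f` has oscillation at most `1/(k+1)` -/
def A (k : ℕ) : Set Y :=
  {y | ∃ δ > 0, ∀ x₁ ∈ ball y δ, ∀ x₂ ∈ ball y δ, ‖f x₁ - f x₂‖ ≤ 1 / (k + 1)}

lemma isOpen_A (k : ℕ) : IsOpen (A f k) := by
  rw [Metric.isOpen_iff]
  rintro y ⟨δ, hδ, hy⟩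
  refine ⟨δ / 2, by linarith, fun z hz => ⟨δ / 2, by linarith, fun x₁ h₁ x₂ h₂ => ?_⟩⟩
  have hz' : dist z y < δ / 2 := hz
  refine hy x₁ ?_ x₂ ?_ <;>
    · rw [mem_ball] at *
      calc dist _ y ≤ dist _ z + dist z y := dist_triangle _ _ _
        _ < δ / 2 + δ / 2 := by first | exact add_lt_add h₁ hz' | exact add_lt_add h₂ hz'
        _ = δ := by ring

lemma A_anti : Antitone (A f) := by
  intro k m hkm y hy
  obtain ⟨δ, hδ, hy⟩ := hy
  refine ⟨δ, hδ, fun x₁ h₁ x₂ h₂ => (hy x₁ h₁ x₂ h₂).trans ?_⟩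
  have : (k:ℝ) + 1 ≤ (m:ℝ) + 1 := by exact_mod_cast by omega
  exact one_div_le_one_div_of_le (by positivity) this

lemma mem_A_of_continuousAt {y : Y} (hy : ContinuousAt f y) (k : ℕ) : y ∈ A f k := by
  have hk : (0:ℝ) < 1 / (2 * (k + 1)) := by positivity
  obtain ⟨δ, hδ, hball⟩ := Metric.continuousAt_iff.1 hy _ hk
  refine ⟨δ, hδ, fun x₁ h₁ x₂ h₂ => ?_⟩
  have e₁ := hball (mem_ball.1 h₁)
  have e₂ := hball (mem_ball.1 h₂)
  rw [dist_eq_norm] at e₁ e₂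
  calc ‖f x₁ - f x₂‖ ≤ ‖f x₁ - f y‖ + ‖f y - f x₂‖ := norm_sub_le_norm_sub_add_norm_sub _ _ _
    _ ≤ 1 / (2 * (k + 1)) + 1 / (2 * (k + 1)) := by
        refine add_le_add e₁.le ?_
        rw [norm_sub_rev]; exact e₂.le
    _ ≤ 1 / (k + 1) := by
        rw [← add_div, div_le_div_iff₀ (by positivity) (by positivity)]
        nlinarith [k.cast_nonneg (α := ℝ)]

/-- truncated distance to the complement of `A f k` -/
noncomputable def dd (k : ℕ) (y : Y) : ℝ := (min (EMetric.infEdist y (A f k)ᶜ) 1).toReal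

lemma dd_nonneg (k : ℕ) (y : Y) : 0 ≤ dd f k y := ENNReal.toReal_nonneg

lemma dd_cont (k : ℕ) : Continuous (dd f k) := by
  have h1 : Continuous fun y : Y => min (EMetric.infEdist y (A f k)ᶜ) 1 :=
    EMetric.continuous_infEdist.min continuous_const
  exact ENNReal.continuousOn_toReal.comp_continuous h1
    (fun y => ne_top_of_le_ne_top ENNReal.one_ne_top (min_le_right _ _))

lemma dd_anti {k m : ℕ} (hkm : k ≤ m) (y : Y) : dd f m y ≤ dd f k y := by
  refine ENNReal.toReal_mono (ne_top_of_le_ne_top ENNReal.one_ne_top (min_le_right _ _)) ?_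
  exact min_le_min (EMetric.infEdist_anti (compl_subset_compl.2 (A_anti f hkm))) le_rfl

lemma mem_A_of_dd_pos {k : ℕ} {y : Y} (h : 0 < dd f k y) : y ∈ A f k := by
  by_contra hy
  have : EMetric.infEdist y (A f k)ᶜ = 0 := EMetric.infEdist_zero_of_mem hy
  rw [dd, this] at h
  simp at h

lemma dd_pos_of_mem {k : ℕ} {y : Y} (h : y ∈ A f k) : 0 < dd f k y := by
  have h1 : 0 < EMetric.infEdist y (A f k)ᶜ := by
    unfold EMetric.infEdist
    rw [EMetric.infEdist_pos_iff_notMem_closure,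
      ((isOpen_A f k).isClosed_compl).closure_eq]
    exact fun hc => hc h
  refine ENNReal.toReal_pos ?_ (ne_top_of_le_ne_top ENNReal.one_ne_top (min_le_right _ _))
  exact (lt_min h1 zero_lt_one).ne'

/-- activation weight of scale `k` at time `n` -/
noncomputable def sg (k n : ℕ) (y : Y) : ℝ :=
  max 0 (min 1 (n * dd f k y - 1)) * max 0 (min 1 ((n : ℝ) - k - 1))

lemma sg_nonneg (k n : ℕ) (y : Y) : 0 ≤ sg f k n y :=
  mul_nonneg (le_max_left _ _) (le_max_left _ _)

lemma sg_le_one (k n : ℕ) (y : Y) : sg f k n y ≤ 1 := by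
  have h1 : max 0 (min 1 ((n:ℝ) * dd f k y - 1)) ≤ 1 := max_le zero_le_one (min_le_left _ _)
  have h2 : max 0 (min 1 ((n : ℝ) - k - 1)) ≤ 1 := max_le zero_le_one (min_le_left _ _)
  calc sg f k n y ≤ 1 * 1 := mul_le_mul h1 h2 (le_max_left _ _) zero_le_one
    _ = 1 := one_mul 1

lemma sg_cont (k n : ℕ) : Continuous (sg f k n) := by
  exact (continuous_const.max (continuous_const.min ((continuous_const.mul
    (dd_cont f k)).sub continuous_const))).mul continuous_const

lemma sg_anti {k m : ℕ} (hkm : k ≤ m) (n : ℕ) (y : Y) : sg f m n y ≤ sg f k n y := by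
  have hd : dd f m y ≤ dd f k y := dd_anti f hkm y
  refine mul_le_mul ?_ ?_ (le_max_left _ _) (le_max_left _ _)
  · exact max_le_max le_rfl (min_le_min le_rfl (by
      have : (n:ℝ) * dd f m y ≤ n * dd f k y := by
        exact mul_le_mul_of_nonneg_left hd (Nat.cast_nonneg n)
      linarith))
  · refine max_le_max le_rfl (min_le_min le_rfl ?_)
    have : (k:ℝ) ≤ m := by exact_mod_cast hkm
    linarith

lemma sg_eq_one {k n : ℕ} {y : Y} (h1 : 2 ≤ (n:ℝ) * dd f k y) (h2 : (k:ℝ) + 2 ≤ n) :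
    sg f k n y = 1 := by
  rw [sg, max_eq_right, max_eq_right, min_eq_left, min_eq_left, one_mul] <;> try linarith
  · rw [min_eq_left] <;> linarith
  · rw [min_eq_left] <;> linarith

lemma sg_eq_zero_of_dd_eq_zero {k n : ℕ} {y : Y} (h : dd f k y = 0) : sg f k n y = 0 := by
  rw [sg, h]
  norm_num

lemma sg_self_eq_zero (n : ℕ) (y : Y) : sg f n n y = 0 := by
  have h2 : max 0 (min 1 ((n:ℝ) - n - 1)) = 0 :=
    max_eq_left ((min_le_right _ _).trans (by linarith))
  rw [sg, h2, mul_zero]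

lemma dd_ge_of_sg_pos {k n : ℕ} {y : Y} (h : 0 < sg f k n y) :
    1 / ((n:ℝ) + 1) ≤ dd f k y := by
  have h1 : 0 < max 0 (min 1 ((n:ℝ) * dd f k y - 1)) := by
    rcases mul_pos_iff.1 h with ⟨ha, _⟩ | ⟨_, hb⟩
    · exact ha
    · exact absurd hb (not_lt.2 (le_max_left _ _))
  have h2 : 0 < min 1 ((n:ℝ) * dd f k y - 1) := by
    by_contra hc
    rw [max_eq_left (not_lt.1 hc)] at h1
    exact lt_irrefl _ h1
  have h3 : 1 < (n:ℝ) * dd f k y := by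
    have := (lt_min_iff.1 h2).2
    linarith
  have hd : 0 ≤ dd f k y := dd_nonneg f k y
  rw [div_le_iff₀ (by positivity)]
  nlinarith

end ExCCP

open ExCCP in
/-- Given a function `f` and a sequence of continuous functions `h n`, there is
a sequence of continuous functions `h' n` converging to `f` at every point
where `h n` converges to `f` and at every point where `f` is continuous. -/
theorem exists_continuous_seq_converging_at_continuity_points {Y Z : Type*}
    [MetricSpace Y] [NormedAddCommGroup Z] [NormedSpace ℝ Z]
    (f : Y → Z) (h : ℕ → Y → Z) (hcont : ∀ n, Continuous (h n)) :
    ∃ h' : ℕ → Y → Z,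
      (∀ n, Continuous (h' n)) ∧
      (∀ y, Tendsto (fun n => h n y) atTop (nhds (f y)) →
        Tendsto (fun n => h' n y) atTop (nhds (f y))) ∧
      (∀ y, ContinuousAt f y → Tendsto (fun n => h' n y) atTop (nhds (f y))) := by
  classical
  have hFA : ∀ k n : ℕ, ∀ y ∈ {y | 1/((n:ℝ)+1) ≤ dd f k y},
      ∃ δ > 0, ∀ x₁ ∈ ball y δ, ∀ x₂ ∈ ball y δ, ‖f x₁ - f x₂‖ ≤ 1/((k:ℝ)+1) := by
    intro k n y hy
    exact mem_A_of_dd_pos f (lt_of_lt_of_le (by positivity) hy)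
  choose G hGcont hG using fun (k n : ℕ) => lemA f (1/((k:ℝ)+1)) (by positivity)
      {y | 1/((n:ℝ)+1) ≤ dd f k y}
      (isClosed_le continuous_const (dd_cont f k)) (hFA k n)
  set P : ℕ → ℕ → Y → Z := fun k n y => G k n y + pull (2/((k:ℝ)+1)) (h n y - G k n y)
    with hPdef
  set h' : ℕ → Y → Z := fun n y =>
    (1 - sg f 0 n y) • h n y +
      ∑ k ∈ Finset.range n, (sg f k n y - sg f (k+1) n y) • P k n y with hh'
  -- basic facts
  have hPcont : ∀ k n, Continuous (P k n) := fun k n =>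
    (hGcont k n).add ((continuous_pull (by positivity)).comp ((hcont n).sub (hGcont k n)))
  have hPd : ∀ (k n : ℕ) (y : Y), 1/((n:ℝ)+1) ≤ dd f k y → ‖P k n y - f y‖ ≤ 3/((k:ℝ)+1) := by
    intro k n y hy
    have h1 : ‖G k n y - f y‖ ≤ 1/((k:ℝ)+1) := hG k n y hy
    have h2 : ‖pull (2/((k:ℝ)+1)) (h n y - G k n y)‖ ≤ 2/((k:ℝ)+1) :=
      norm_pull_le (by positivity) _
    have h3 : P k n y - f y = (G k n y - f y) + pull (2/((k:ℝ)+1)) (h n y - G k n y) := by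
      rw [hPdef]; beta_reduce; abel
    rw [h3]
    calc ‖_ + _‖ ≤ ‖G k n y - f y‖ + ‖pull (2/((k:ℝ)+1)) (h n y - G k n y)‖ := norm_add_le _ _
      _ ≤ 1/((k:ℝ)+1) + 2/((k:ℝ)+1) := add_le_add h1 h2
      _ = 3/((k:ℝ)+1) := by rw [← add_div]; norm_num
  have hw : ∀ (k n : ℕ) (y : Y), 0 ≤ sg f k n y - sg f (k+1) n y :=
    fun k n y => sub_nonneg.2 (sg_anti f (Nat.le_succ k) n y)
  have sg_eq_zero_of_le : ∀ {k n : ℕ} (y : Y), n ≤ k → sg f k n y = 0 := by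
    intro k n y hkn
    have h2 : max 0 (min 1 ((n:ℝ) - k - 1)) = 0 := by
      refine max_eq_left ((min_le_right _ _).trans ?_)
      have : (n:ℝ) ≤ k := by exact_mod_cast hkn
      linarith
    rw [sg, h2, mul_zero]
  -- decomposition
  have hdecomp : ∀ (y : Y) (n K : ℕ), K ≤ n → (∀ k, K ≤ k → sg f k n y = 0) →
      h' n y - f y = (1 - sg f 0 n y) • (h n y - f y) +
        ∑ k ∈ Finset.range K, (sg f k n y - sg f (k+1) n y) • (P k n y - f y) := by
    intro y n K hKn hzero
    have hsub : ∑ k ∈ Finset.range n, (sg f k n y - sg f (k+1) n y) • P k n y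
        = ∑ k ∈ Finset.range K, (sg f k n y - sg f (k+1) n y) • P k n y := by
      refine (Finset.sum_subset (Finset.range_subset_range.2 hKn) ?_).symm
      intro k _ hk
      have hKk : K ≤ k := by simpa using Finset.mem_range.not.1 hk |> not_lt.1
      rw [hzero k hKk, hzero (k+1) (hKk.trans (Nat.le_succ k)), sub_self, zero_smul]
    have hsumw : ∑ k ∈ Finset.range K, (sg f k n y - sg f (k+1) n y) = sg f 0 n y := by
      rw [Finset.sum_range_sub' (fun k => sg f k n y) K, hzero K le_rfl, sub_zero]
    have e1 : ∑ k ∈ Finset.range K, (sg f k n y - sg f (k+1) n y) • (P k n y - f y)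
        = (∑ k ∈ Finset.range K, (sg f k n y - sg f (k+1) n y) • P k n y)
          - (∑ k ∈ Finset.range K, (sg f k n y - sg f (k+1) n y)) • f y := by
      simp only [smul_sub, Finset.sum_sub_distrib, ← Finset.sum_smul]
    rw [hh']
    simp only []
    rw [hsub, e1, hsumw]
    simp only [smul_sub, sub_smul, one_smul]
    abel
  -- convergence wherever all dd are positive
  have hB : ∀ y, (∀ k, 0 < dd f k y) → Tendsto (fun n => h' n y) atTop (𝓝 (f y)) := by
    intro y hall
    rw [Metric.tendsto_atTop]
    intro ε hε
    obtain ⟨k₀, hk₀⟩ := exists_nat_gt (3/ε)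
    have hk₀' : 3/((k₀:ℝ)+1) < ε := by
      rw [div_lt_iff₀ (by positivity)]
      have h3 : 3 < ε * k₀ := by
        have := (div_lt_iff₀ hε).1 hk₀
        linarith
      nlinarith
    obtain ⟨N₁, hN₁⟩ := exists_nat_gt (2 / dd f k₀ y)
    refine ⟨max N₁ (k₀+2), fun n hn => ?_⟩
    have hn1 : (N₁:ℝ) ≤ n := by exact_mod_cast (le_max_left _ _).trans hn
    have hn2 : (k₀:ℝ)+2 ≤ n := by exact_mod_cast (le_max_right _ _).trans hn
    have hσk₀ : sg f k₀ n y = 1 := by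
      refine sg_eq_one f ?_ hn2
      have h2 : 2 / dd f k₀ y < (n:ℝ) := lt_of_lt_of_le hN₁ hn1
      rw [div_lt_iff₀ (hall k₀)] at h2
      linarith
    have hσ : ∀ k ≤ k₀, sg f k n y = 1 := fun k hk =>
      le_antisymm (sg_le_one f k n y) (hσk₀ ▸ sg_anti f hk n y)
    have hKn : (k₀+2 : ℕ) ≤ n := by exact_mod_cast (le_max_right _ _).trans hn
    have hdec := hdecomp y n n le_rfl (fun k hk => sg_eq_zero_of_le y hk)
    rw [hσ 0 (Nat.zero_le _), sub_self, zero_smul, zero_add] at hdec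
    rw [dist_eq_norm, hdec]
    have hsumw : ∑ k ∈ Finset.range n, (sg f k n y - sg f (k+1) n y) = 1 := by
      rw [Finset.sum_range_sub' (fun k => sg f k n y) n, sg_eq_zero_of_le y le_rfl, sub_zero,
        hσ 0 (Nat.zero_le _)]
    calc ‖∑ k ∈ Finset.range n, (sg f k n y - sg f (k+1) n y) • (P k n y - f y)‖
        ≤ ∑ k ∈ Finset.range n, (sg f k n y - sg f (k+1) n y) * (3/((k₀:ℝ)+1)) := by
          refine norm_sum_le_of_le _ (fun k hk => ?_)
          rcases eq_or_lt_of_le (hw k n y) with heq | hpos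
          · rw [← heq]; simp
          · have hsgk : 0 < sg f k n y := lt_of_lt_of_le hpos (by
              have := sg_nonneg f (k+1) n y
              linarith)
            have hk₀k : k₀ ≤ k := by
              by_contra hc
              push_neg at hc
              rw [hσ k (by omega), hσ (k+1) (by omega), sub_self] at hpos
              exact lt_irrefl _ hpos
            have hb := hPd k n y (dd_ge_of_sg_pos f hsgk)
            rw [norm_smul, Real.norm_of_nonneg (hw k n y)]
            refine mul_le_mul_of_nonneg_left (hb.trans ?_) (hw k n y)
            refine div_le_div_of_nonneg_left (by norm_num) (by positivity) ?_
            exact_mod_cast by omega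
      _ = 3/((k₀:ℝ)+1) := by rw [← Finset.sum_mul, hsumw, one_mul]
      _ < ε := hk₀'
  refine ⟨h', fun n => ?_, fun y hy => ?_, fun y hy => ?_⟩
  · exact ((continuous_const.sub (sg_cont f 0 n)).smul (hcont n)).add
      (continuous_finset_sum _ fun k _ => ((sg_cont f k n).sub (sg_cont f (k+1) n)).smul
        (hPcont k n))
  · by_cases hall : ∀ k, 0 < dd f k y
    · exact hB y hall
    · -- convergence point with some dd zero
      push_neg at hall
      obtain ⟨k₁, hk₁⟩ := hall
      have hex : ∃ k, dd f k y = 0 := ⟨k₁, le_antisymm hk₁ (dd_nonneg f k₁ y)⟩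
      set K := Nat.find hex with hKdef
      have hKz : ∀ k, K ≤ k → dd f k y = 0 := fun k hk =>
        le_antisymm ((dd_anti f hk y).trans_eq (Nat.find_spec hex)) (dd_nonneg f k y)
      have hKzsg : ∀ n, ∀ k, K ≤ k → sg f k n y = 0 := fun n k hk =>
        sg_eq_zero_of_dd_eq_zero f (hKz k hk)
      have hKp : ∀ k, k < K → 0 < dd f k y := fun k hk =>
        lt_of_le_of_ne (dd_nonneg f k y) (Ne.symm (Nat.find_min hex hk))
      have hzn : Tendsto (fun n => ‖h n y - f y‖) atTop (𝓝 0) := by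
        simpa using (tendsto_sub_nhds_zero_iff.2 hy).norm
      rw [← tendsto_sub_nhds_zero_iff]
      have hev : ∀ᶠ n in atTop,
          (1 - sg f 0 n y) • (h n y - f y) +
            ∑ k ∈ Finset.range K, (sg f k n y - sg f (k+1) n y) • (P k n y - f y)
          = h' n y - f y := by
        filter_upwards [eventually_ge_atTop K] with n hn
        exact (hdecomp y n K hn (hKzsg n)).symm
      refine Tendsto.congr' hev ?_
      have hsg_ev_one : ∀ (k : ℕ), 0 < dd f k y → ∀ᶠ n in atTop, sg f k n y = 1 := by
        intro k hdk
        obtain ⟨N, hN⟩ := exists_nat_gt (max (2 / dd f k y) ((k:ℝ)+2))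
        filter_upwards [eventually_ge_atTop N] with n hn
        have hn' : (N:ℝ) ≤ n := by exact_mod_cast hn
        have h1 : 2 / dd f k y < (n:ℝ) := ((le_max_left _ _).trans_lt hN).trans_le hn'
        have h2 : (k:ℝ)+2 ≤ n := (((le_max_right _ _).trans_lt hN).trans_le hn').le
        rw [div_lt_iff₀ hdk] at h1
        exact sg_eq_one f (by linarith) h2
      have hdd_ev : ∀ (k : ℕ), 0 < dd f k y → ∀ᶠ (n : ℕ) in atTop, 1/((n:ℝ)+1) ≤ dd f k y := by
        intro k hdk
        obtain ⟨N, hN⟩ := exists_nat_gt (1 / dd f k y)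
        filter_upwards [eventually_ge_atTop N] with n hn
        have hn' : (N:ℝ) ≤ n := by exact_mod_cast hn
        rw [div_le_iff₀ (by positivity)]
        have h1 : 1 / dd f k y < (n:ℝ)+1 := by linarith [hN.trans_le hn']
        rw [div_lt_iff₀ hdk] at h1
        linarith
      have hterm : ∀ k ∈ Finset.range K, Tendsto
          (fun n => (sg f k n y - sg f (k+1) n y) • (P k n y - f y)) atTop (𝓝 0) := by
        intro k hk
        have hkK : k < K := Finset.mem_range.1 hk
        by_cases hk1 : k + 1 < K
        · refine Tendsto.congr' ?_ tendsto_const_nhds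
          filter_upwards [hsg_ev_one k (hKp k hkK), hsg_ev_one (k+1) (hKp (k+1) hk1)]
            with n h1 h2
          rw [h1, h2, sub_self, zero_smul]
        · -- k + 1 = K : top scale
          have hPh : ∀ᶠ n in atTop, P k n y = h n y := by
            have hcv : ∀ᶠ n in atTop, ‖h n y - f y‖ ≤ 1/((k:ℝ)+1) := by
              have := Metric.tendsto_atTop.1 hy (1/((k:ℝ)+1)) (by positivity)
              obtain ⟨N, hN⟩ := this
              filter_upwards [eventually_ge_atTop N] with n hn
              have := hN n hn
              rw [dist_eq_norm] at this
              exact this.le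
            filter_upwards [hcv, hdd_ev k (hKp k hkK)] with n h1 h2
            have hGf : ‖G k n y - f y‖ ≤ 1/((k:ℝ)+1) := hG k n y h2
            have : ‖h n y - G k n y‖ ≤ 2/((k:ℝ)+1) := by
              calc ‖h n y - G k n y‖ ≤ ‖h n y - f y‖ + ‖f y - G k n y‖ :=
                    norm_sub_le_norm_sub_add_norm_sub _ _ _
                _ ≤ 1/((k:ℝ)+1) + 1/((k:ℝ)+1) := by
                    refine add_le_add h1 ?_
                    rw [norm_sub_rev]; exact hGf
                _ = 2/((k:ℝ)+1) := by rw [← add_div]; norm_num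
            rw [hPdef]
            simp only []
            rw [pull_eq_self this]
            abel
          refine squeeze_zero_norm' ?_ hzn
          filter_upwards [hPh] with n hn
          rw [hn, norm_smul, Real.norm_of_nonneg (hw k n y)]
          refine mul_le_of_le_one_left (norm_nonneg _) ?_
          linarith [sg_le_one f k n y, sg_nonneg f (k+1) n y, sg_anti f (Nat.le_succ k) n y]
      have hA : Tendsto (fun n => (1 - sg f 0 n y) • (h n y - f y)) atTop (𝓝 0) := by
        refine squeeze_zero_norm (fun n => ?_) hzn
        rw [norm_smul]
        refine mul_le_of_le_one_left (norm_nonneg _) ?_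
        rw [Real.norm_eq_abs, abs_le]
        constructor <;> linarith [sg_le_one f 0 n y, sg_nonneg f 0 n y]
      have hS : Tendsto (fun n => ∑ k ∈ Finset.range K,
          (sg f k n y - sg f (k+1) n y) • (P k n y - f y)) atTop (𝓝 0) := by
        have := tendsto_finset_sum (Finset.range K) hterm
        simpa using this
      simpa using hA.add hS
  · exact hB y (fun k => dd_pos_of_mem f (mem_A_of_continuousAt f hy k))
end

section
/- Let Y be a metric space and Z a normed linear space. Given a function f : Y → Z and a sequence of continuous functions h_n : Y → Z, there exist bounded locally Lipschitz functions f_n : Y → Z such that: (a) f_n(y) → z whenever y ∈ Y, z ∈ Z and h_n(y) → z; (b) the pair ({f_n}, f) has UCPC if the pair ({h_n}, f) has UCPC; and (c) {f_n} is uniformly bounded on B_Y(a,r) whenever a ∈ Y, r ∈ (0,∞) ∪ {∞}, h_n → f pointwise on B_Y(a,2r) and f is bounded on B_Y(a,2r). -/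
open Filter Topology Metric ENNReal NNReal

namespace UCPCAux

variable {Y Z : Type*} [MetricSpace Y] [NormedAddCommGroup Z] [NormedSpace ℝ Z]

/-! ### Radial truncation -/

/-- Radial truncation of `v` to the closed ball of radius `R`. -/
noncomputable def trunc (v : Z) (R : ℝ) : Z := (R / max R ‖v‖) • v

lemma trunc_eq_self {v : Z} {R : ℝ} (h : ‖v‖ ≤ R) : trunc v R = v := by
  rcases eq_or_ne v 0 with rfl | hv
  · simp [trunc]
  · have hpos : 0 < R := lt_of_lt_of_le (norm_pos_iff.mpr hv) h
    rw [trunc, max_eq_left h, div_self hpos.ne', one_smul]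

lemma norm_trunc_le {v : Z} {R : ℝ} (hR : 0 ≤ R) : ‖trunc v R‖ ≤ R := by
  rcases eq_or_ne v 0 with rfl | hv
  · simpa [trunc] using hR
  · have h0 : 0 < ‖v‖ := norm_pos_iff.mpr hv
    have hmax : 0 < max R ‖v‖ := lt_max_of_lt_right h0
    rw [trunc, norm_smul, Real.norm_eq_abs, abs_of_nonneg (div_nonneg hR hmax.le)]
    calc R / max R ‖v‖ * ‖v‖ ≤ R / max R ‖v‖ * max R ‖v‖ :=
          mul_le_mul_of_nonneg_left (le_max_right _ _) (div_nonneg hR hmax.le)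
      _ = R := div_mul_cancel₀ _ hmax.ne'

lemma norm_trunc_le_norm (v : Z) (R : ℝ) (hR : 0 ≤ R) : ‖trunc v R‖ ≤ ‖v‖ := by
  rw [trunc, norm_smul, Real.norm_eq_abs]
  rcases le_or_gt (max R ‖v‖) 0 with h0 | h0
  · have : ‖v‖ = 0 := le_antisymm ((le_max_right _ _).trans h0) (norm_nonneg v)
    simp [this]
  · have h1 : R / max R ‖v‖ ≤ 1 := div_le_one_of_le₀ (le_max_left _ _) h0.le
    have h2 : 0 ≤ R / max R ‖v‖ := div_nonneg hR h0.le
    calc |R / max R ‖v‖| * ‖v‖ = (R / max R ‖v‖) * ‖v‖ := by rw [abs_of_nonneg h2]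
      _ ≤ 1 * ‖v‖ := mul_le_mul_of_nonneg_right h1 (norm_nonneg v)
      _ = ‖v‖ := one_mul _

private lemma trunc_mixed {v w : Z} {R S : ℝ} (hR : 0 ≤ R) (hS : 0 ≤ S)
    (hv : R < ‖v‖) (hw : ‖w‖ ≤ S) :
    ‖trunc v R - w‖ ≤ 2 * ‖v - w‖ + |R - S| := by
  have hvpos : 0 < ‖v‖ := hR.trans_lt hv
  have htv : trunc v R = (R / ‖v‖) • v := by rw [trunc, max_eq_right hv.le]
  have h1 : ‖trunc v R - v‖ = ‖v‖ - R := by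
    have e : trunc v R - v = (R / ‖v‖ - 1) • v := by rw [htv, sub_smul, one_smul]
    rw [e, norm_smul, Real.norm_eq_abs]
    rw [abs_of_nonpos (by rw [sub_nonpos, div_le_one hvpos]; exact hv.le)]
    field_simp; ring
  have h2 : ‖v‖ - R ≤ ‖v - w‖ + |R - S| := by
    have h3 : ‖v‖ ≤ ‖v - w‖ + ‖w‖ := by
      have := norm_add_le (v - w) w
      simpa [sub_add_cancel] using this
    have h4 : S - R ≤ |R - S| := by
      rw [abs_sub_comm]; exact le_abs_self _
    linarith
  calc ‖trunc v R - w‖ ≤ ‖trunc v R - v‖ + ‖v - w‖ := by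
        have := norm_add_le (trunc v R - v) (v - w)
        simpa [sub_add_sub_cancel] using this
    _ = (‖v‖ - R) + ‖v - w‖ := by rw [h1]
    _ ≤ 2 * ‖v - w‖ + |R - S| := by linarith

lemma trunc_lipschitz {v w : Z} {R S : ℝ} (hR : 0 ≤ R) (hS : 0 ≤ S) :
    ‖trunc v R - trunc w S‖ ≤ 2 * ‖v - w‖ + |R - S| := by
  rcases le_or_gt ‖v‖ R with hv | hv <;> rcases le_or_gt ‖w‖ S with hw | hw
  · rw [trunc_eq_self hv, trunc_eq_self hw]
    have : (0:ℝ) ≤ ‖v - w‖ := norm_nonneg _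
    have : (0:ℝ) ≤ |R - S| := abs_nonneg _
    linarith [norm_nonneg (v - w)]
  · rw [trunc_eq_self hv]
    have := trunc_mixed hS hR hw hv
    calc ‖v - trunc w S‖ = ‖trunc w S - v‖ := norm_sub_rev _ _
      _ ≤ 2 * ‖w - v‖ + |S - R| := this
      _ = 2 * ‖v - w‖ + |R - S| := by rw [norm_sub_rev, abs_sub_comm]
  · rw [trunc_eq_self hw]
    exact trunc_mixed hR hS hv hw
  · -- both truncated
    have hvpos : 0 < ‖v‖ := hR.trans_lt hv
    have hwpos : 0 < ‖w‖ := hS.trans_lt hw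
    have htv : trunc v R = (R / ‖v‖) • v := by rw [trunc, max_eq_right hv.le]
    have htw : trunc w S = (S / ‖w‖) • w := by rw [trunc, max_eq_right hw.le]
    have hsplit : trunc v R - trunc w S
        = (R / ‖v‖) • (v - w) + (R / ‖v‖ - S / ‖w‖) • w := by
      rw [htv, htw, smul_sub, sub_smul]; abel
    have hRv1 : R / ‖v‖ ≤ 1 := (div_le_one hvpos).mpr hv.le
    have hRv0 : 0 ≤ R / ‖v‖ := div_nonneg hR hvpos.le
    have h1 : ‖(R / ‖v‖) • (v - w)‖ ≤ ‖v - w‖ := by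
      rw [norm_smul, Real.norm_eq_abs, abs_of_nonneg hRv0]
      exact mul_le_of_le_one_left (norm_nonneg _) hRv1
    have h2 : ‖(R / ‖v‖ - S / ‖w‖) • w‖ ≤ ‖v - w‖ + |R - S| := by
      rw [norm_smul, Real.norm_eq_abs]
      have key : |R / ‖v‖ - S / ‖w‖| * ‖w‖ = |R * ‖w‖ - S * ‖v‖| / ‖v‖ := by
        rw [div_sub_div _ _ hvpos.ne' hwpos.ne', abs_div, abs_of_pos (mul_pos hvpos hwpos),
          mul_comm ‖v‖ S]
        field_simp
      rw [key]
      have hnum : |R * ‖w‖ - S * ‖v‖| ≤ R * ‖v - w‖ + ‖v‖ * |R - S| := by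
        have e1 : R * ‖w‖ - S * ‖v‖ = R * (‖w‖ - ‖v‖) + ‖v‖ * (R - S) := by ring
        calc |R * ‖w‖ - S * ‖v‖| = |R * (‖w‖ - ‖v‖) + ‖v‖ * (R - S)| := by rw [e1]
          _ ≤ |R * (‖w‖ - ‖v‖)| + |‖v‖ * (R - S)| := abs_add_le _ _
          _ = R * |‖w‖ - ‖v‖| + ‖v‖ * |R - S| := by
              rw [abs_mul, abs_mul, abs_of_nonneg hR, abs_of_nonneg hvpos.le]
          _ ≤ R * ‖v - w‖ + ‖v‖ * |R - S| := by
              have h5 : |‖w‖ - ‖v‖| ≤ ‖w - v‖ := abs_norm_sub_norm_le _ _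
              rw [norm_sub_rev] at h5
              exact add_le_add_left (mul_le_mul_of_nonneg_left h5 hR) _
      rw [div_le_iff₀ hvpos]
      have h6 : R * ‖v - w‖ ≤ ‖v‖ * ‖v - w‖ := mul_le_mul_of_nonneg_right hv.le (norm_nonneg _)
      nlinarith [hnum]
    calc ‖trunc v R - trunc w S‖ = ‖(R / ‖v‖) • (v - w) + (R / ‖v‖ - S / ‖w‖) • w‖ := by
          rw [hsplit]
      _ ≤ ‖(R / ‖v‖) • (v - w)‖ + ‖(R / ‖v‖ - S / ‖w‖) • w‖ := norm_add_le _ _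
      _ ≤ ‖v - w‖ + (‖v - w‖ + |R - S|) := add_le_add h1 h2
      _ = 2 * ‖v - w‖ + |R - S| := by ring

/-! ### The quantity `σ*` -/

/-- `sigma h y = sup_n inf_{m ≥ n} max_{k ∈ [m, 2m]} ‖h k y‖`. -/
noncomputable def sigma (h : ℕ → Y → Z) (y : Y) : ℝ≥0∞ :=
  ⨆ n : ℕ, ⨅ (m : ℕ) (_ : n ≤ m),
    (((Finset.Icc m (2 * m)).sup fun k => ‖h k y‖₊ : ℝ≥0) : ℝ≥0∞)

lemma sigma_le {h : ℕ → Y → Z} {y : Y} {C : ℝ≥0} {N : ℕ}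
    (hC : ∀ k, N ≤ k → ‖h k y‖₊ ≤ C) : sigma h y ≤ (C : ℝ≥0∞) := by
  refine iSup_le fun n => ?_
  refine (iInf₂_le (max n N) (le_max_left _ _)).trans ?_
  refine ENNReal.coe_le_coe.mpr (Finset.sup_le fun k hk => ?_)
  exact hC k ((le_max_right n N).trans (Finset.mem_Icc.mp hk).1)

lemma le_sigma {h : ℕ → Y → Z} {y : Y} {C : ℝ≥0} {N : ℕ}
    (hC : ∀ k, N ≤ k → C ≤ ‖h k y‖₊) : (C : ℝ≥0∞) ≤ sigma h y := by
  refine le_trans ?_ (le_iSup _ N)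
  refine le_iInf₂ fun m hm => ?_
  have hmem : m ∈ Finset.Icc m (2 * m) := Finset.mem_Icc.mpr ⟨le_rfl, by omega⟩
  exact ENNReal.coe_le_coe.mpr ((hC m hm).trans (Finset.le_sup (f := fun k => ‖h k y‖₊) hmem))

/-! ### The truncation level `Λ` -/

/-- Capped version of `sigma`. -/
noncomputable def cap (h : ℕ → Y → Z) (n : ℕ) (y : Y) : ℝ :=
  (min (sigma h y) (n : ℝ≥0∞)).toReal

lemma cap_nonneg (h : ℕ → Y → Z) (n : ℕ) (y : Y) : 0 ≤ cap h n y :=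
  ENNReal.toReal_nonneg

lemma cap_le (h : ℕ → Y → Z) (n : ℕ) (y : Y) : cap h n y ≤ n := by
  have : min (sigma h y) (n : ℝ≥0∞) ≤ (n : ℝ≥0∞) := min_le_right _ _
  simpa [cap] using ENNReal.toReal_mono (by simp) this

lemma cap_ge {h : ℕ → Y → Z} {n : ℕ} {y : Y} {c : ℝ}
    (hc : ENNReal.ofReal c ≤ sigma h y) (hn : c ≤ (n : ℝ)) :
    max c 0 ≤ cap h n y := by
  have h1 : ENNReal.ofReal c ≤ min (sigma h y) (n : ℝ≥0∞) := by
    refine le_min hc ?_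
    calc ENNReal.ofReal c ≤ ENNReal.ofReal (n : ℝ) := ENNReal.ofReal_le_ofReal hn
      _ = (n : ℝ≥0∞) := ENNReal.ofReal_natCast n
  have hne : min (sigma h y) (n : ℝ≥0∞) ≠ ⊤ :=
    ne_top_of_le_ne_top (ENNReal.natCast_ne_top n) (min_le_right _ _)
  have h2 : (ENNReal.ofReal c).toReal ≤ cap h n y := ENNReal.toReal_mono hne h1
  rwa [ENNReal.toReal_ofReal'] at h2

/-- The truncation level. -/
noncomputable def Lam (h : ℕ → Y → Z) (n : ℕ) (y : Y) : ℝ :=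
  1 + ⨆ y' : Y, (cap h n y' - (n : ℝ) ^ 2 * dist y y')

lemma Lam_bddAbove (h : ℕ → Y → Z) (n : ℕ) (y : Y) :
    BddAbove (Set.range fun y' : Y => cap h n y' - (n : ℝ) ^ 2 * dist y y') := by
  refine ⟨(n : ℝ), ?_⟩
  rintro x ⟨y', rfl⟩
  have h1 := cap_le h n y'
  have h2 : 0 ≤ (n : ℝ) ^ 2 * dist y y' := mul_nonneg (sq_nonneg _) dist_nonneg
  show cap h n y' - (n : ℝ) ^ 2 * dist y y' ≤ (n : ℝ)
  linarith

lemma Lam_ge [Nonempty Y] (h : ℕ → Y → Z) (n : ℕ) (y : Y) :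
    1 + cap h n y ≤ Lam h n y := by
  have h1 := le_ciSup (Lam_bddAbove h n y) y
  simp only [dist_self, mul_zero, sub_zero] at h1
  unfold Lam
  linarith

lemma Lam_nonneg [Nonempty Y] (h : ℕ → Y → Z) (n : ℕ) (y : Y) : 0 ≤ Lam h n y :=
  le_trans (by positivity) ((add_le_add_right (cap_nonneg h n y) 1).trans (Lam_ge h n y))

lemma Lam_le [Nonempty Y] (h : ℕ → Y → Z) (n : ℕ) (y : Y) : Lam h n y ≤ 1 + n := by
  refine add_le_add_right (ciSup_le fun y' => ?_) 1
  have h1 := cap_le h n y'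
  have h2 : 0 ≤ (n : ℝ) ^ 2 * dist y y' := mul_nonneg (sq_nonneg _) dist_nonneg
  linarith

lemma Lam_lip [Nonempty Y] (h : ℕ → Y → Z) (n : ℕ) (y₁ y₂ : Y) :
    Lam h n y₁ ≤ Lam h n y₂ + (n : ℝ) ^ 2 * dist y₁ y₂ := by
  have key : (⨆ y' : Y, (cap h n y' - (n : ℝ) ^ 2 * dist y₁ y'))
      ≤ (⨆ y' : Y, (cap h n y' - (n : ℝ) ^ 2 * dist y₂ y')) + (n : ℝ) ^ 2 * dist y₁ y₂ := by
    refine ciSup_le fun y' => ?_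
    have h2 : cap h n y' - (n : ℝ) ^ 2 * dist y₂ y'
        ≤ ⨆ y'' : Y, (cap h n y'' - (n : ℝ) ^ 2 * dist y₂ y'') :=
      le_ciSup (Lam_bddAbove h n y₂) y'
    have h3 := dist_triangle y₂ y₁ y'
    have h4 : (n : ℝ) ^ 2 * dist y₂ y' ≤ (n : ℝ) ^ 2 * (dist y₂ y₁ + dist y₁ y') :=
      mul_le_mul_of_nonneg_left h3 (sq_nonneg _)
    have h5 : dist y₂ y₁ = dist y₁ y₂ := dist_comm _ _
    nlinarith
  unfold Lam
  linarith

lemma Lam_le_of_ball [Nonempty Y] {h : ℕ → Y → Z} {n : ℕ} {y : Y} {M : ℝ}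
    (hM : 0 ≤ M) (hn : 1 ≤ n) (hball : ∀ y', dist y y' ≤ 1 / (n : ℝ) → cap h n y' ≤ M) :
    Lam h n y ≤ 1 + M := by
  refine add_le_add_right (ciSup_le fun y' => ?_) 1
  rcases le_or_gt (dist y y') (1 / (n : ℝ)) with hd | hd
  · have h1 := hball y' hd
    have h2 : 0 ≤ (n : ℝ) ^ 2 * dist y y' := mul_nonneg (sq_nonneg _) dist_nonneg
    linarith
  · have hn' : (1 : ℝ) ≤ (n : ℝ) := by exact_mod_cast hn
    have h1 : (n : ℝ) ^ 2 * (1 / (n : ℝ)) ≤ (n : ℝ) ^ 2 * dist y y' :=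
      mul_le_mul_of_nonneg_left hd.le (sq_nonneg _)
    have h2 : (n : ℝ) ^ 2 * (1 / (n : ℝ)) = (n : ℝ) := by
      field_simp
    have h3 := cap_le h n y'
    rw [h2] at h1
    linarith

/-! ### Approximation by locally Lipschitz functions -/

lemma exists_locallyLipschitz_approx {g : Y → Z} (hg : Continuous g) {ε : ℝ}
    (hε : 0 < ε) : ∃ G : Y → Z, LocallyLipschitz G ∧ ∀ y, ‖G y - g y‖ ≤ ε := by
  classical
  -- choose radii of oscillation
  have hrad : ∀ x : Y, ∃ δ : ℝ, 0 < δ ∧ ∀ y, dist y x < δ → ‖g y - g x‖ ≤ ε := by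
    intro x
    rcases Metric.continuousAt_iff.mp hg.continuousAt ε hε with ⟨δ, hδ, hd⟩
    refine ⟨δ, hδ, fun y hy => ?_⟩
    have := hd hy
    rw [dist_eq_norm] at this
    exact this.le
  choose rad rad_pos rad_osc using hrad
  obtain ⟨v, v_open, v_cover, v_fin, v_sub⟩ :=
    precise_refinement (fun x : Y => ball x (rad x)) (fun x => isOpen_ball)
      (Set.iUnion_eq_univ_iff.mpr fun y => ⟨y, mem_ball_self (rad_pos y)⟩)
  -- Lipschitz bump functions
  set ψ : Y → Y → ℝ := fun x =>
    if hx : (v x)ᶜ.Nonempty then fun y => infDist y (v x)ᶜ else fun _ => 1 with hψdef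
  have ψ_lip : ∀ x, LipschitzWith 1 (ψ x) := by
    intro x
    rw [hψdef]
    dsimp only
    split_ifs with hx
    · exact lipschitz_infDist_pt _
    · exact LipschitzWith.const' 1
  have ψ_nonneg : ∀ x y, 0 ≤ ψ x y := by
    intro x y
    rw [hψdef]
    dsimp only
    split_ifs with hx
    · exact infDist_nonneg
    · norm_num
  have ψ_zero : ∀ x y, y ∉ v x → ψ x y = 0 := by
    intro x y hy
    rw [hψdef]
    dsimp only
    split_ifs with hx
    · exact infDist_zero_of_mem hy
    · exact absurd ⟨y, hy⟩ hx
  have ψ_pos : ∀ x y, y ∈ v x → 0 < ψ x y := by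
    intro x y hy
    rw [hψdef]
    dsimp only
    split_ifs with hx
    · exact ((isClosed_compl_iff.mpr (v_open x)).notMem_iff_infDist_pos hx).mp
        (by simpa using hy)
    · norm_num
  have ψ_dist : ∀ x a b, |ψ x a - ψ x b| ≤ dist a b := by
    intro x a b
    have := (ψ_lip x).dist_le_mul a b
    rwa [Real.dist_eq, NNReal.coe_one, one_mul] at this
  -- local finiteness data
  have key : ∀ y : Y, ∃ t : Set Y, IsOpen t ∧ y ∈ t ∧ ∃ I : Finset Y,
      ∀ y' ∈ t, ∀ x : Y, ψ x y' ≠ 0 → x ∈ I := by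
    intro y
    obtain ⟨t, ht, hfin⟩ := v_fin y
    refine ⟨interior t, isOpen_interior, mem_interior_iff_mem_nhds.mpr ht,
      hfin.toFinset, fun y' hy' x hx => ?_⟩
    have hyx : y' ∈ v x := by
      by_contra hc
      exact hx (ψ_zero x y' hc)
    exact hfin.mem_toFinset.mpr ⟨y', hyx, interior_subset hy'⟩
  set S : Y → ℝ := fun y => ∑ᶠ x, ψ x y with hSdef
  set num : Y → Z := fun y => ∑ᶠ x, ψ x y • g x with hnumdef
  have hSloc : ∀ (t : Set Y) (I : Finset Y), (∀ y' ∈ t, ∀ x, ψ x y' ≠ 0 → x ∈ I) →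
      ∀ y' ∈ t, S y' = ∑ x ∈ I, ψ x y' := by
    intro t I hI y' hy'
    exact finsum_eq_sum_of_support_subset _ fun x hx =>
      hI y' hy' x (by simpa [Function.mem_support] using hx)
  have hnumloc : ∀ (t : Set Y) (I : Finset Y), (∀ y' ∈ t, ∀ x, ψ x y' ≠ 0 → x ∈ I) →
      ∀ y' ∈ t, num y' = ∑ x ∈ I, ψ x y' • g x := by
    intro t I hI y' hy'
    refine finsum_eq_sum_of_support_subset _ fun x hx => hI y' hy' x ?_
    have hx' : ψ x y' • g x ≠ 0 := by simpa [Function.mem_support] using hx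
    intro h0
    exact hx' (by rw [h0, zero_smul])
  have S_pos : ∀ y, 0 < S y := by
    intro y
    obtain ⟨t, t_open, hyt, I, hI⟩ := key y
    obtain ⟨x₀, hx₀⟩ : ∃ x₀, y ∈ v x₀ :=
      Set.mem_iUnion.mp (v_cover ▸ Set.mem_univ y)
    have hx₀I : x₀ ∈ I := hI y hyt x₀ (ne_of_gt (ψ_pos x₀ y hx₀))
    rw [hSloc t I hI y hyt]
    exact Finset.sum_pos' (fun x _ => ψ_nonneg x y) ⟨x₀, hx₀I, ψ_pos x₀ y hx₀⟩
  refine ⟨fun y => (S y)⁻¹ • num y, ?_, ?_⟩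
  · -- locally Lipschitz
    intro y₀
    obtain ⟨t, t_open, hyt, I, hI⟩ := key y₀
    have hSy₀ := S_pos y₀
    set c : ℝ := S y₀ / 2 with hc
    have hc_pos : 0 < c := by rw [hc]; exact half_pos hSy₀
    have hScont : ContinuousOn S t := by
      exact (continuous_finset_sum I fun x _ => (ψ_lip x).continuous).continuousOn.congr
        fun y' hy' => hSloc t I hI y' hy' 
    set V : Set Y := (t ∩ ball y₀ 1) ∩ (t ∩ S ⁻¹' Set.Ioi c) with hV
    have V_open : IsOpen V :=
      (t_open.inter isOpen_ball).inter
        (hScont.isOpen_inter_preimage t_open isOpen_Ioi)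
    have hy₀V : y₀ ∈ V := by
      refine ⟨⟨hyt, mem_ball_self one_pos⟩, hyt, ?_⟩
      simp only [Set.mem_preimage, Set.mem_Ioi, hc]
      linarith
    set B : ℝ := ∑ x ∈ I, (ψ x y₀ + 1) * ‖g x‖ with hB
    set Knum : ℝ := ∑ x ∈ I, ‖g x‖ with hKnum
    set KS : ℝ := (I.card : ℝ) with hKS
    have hKnum0 : 0 ≤ Knum := Finset.sum_nonneg fun x _ => norm_nonneg _
    have hKS0 : 0 ≤ KS := Nat.cast_nonneg _
    have hB0 : 0 ≤ B := Finset.sum_nonneg fun x _ =>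
      mul_nonneg (by linarith [ψ_nonneg x y₀]) (norm_nonneg _)
    have hVt : ∀ a ∈ V, a ∈ t := fun a ha => ha.1.1
    have hS_lb : ∀ a ∈ V, c < S a := fun a ha => ha.2.2
    have hnum_lip : ∀ a ∈ V, ∀ b ∈ V, ‖num a - num b‖ ≤ Knum * dist a b := by
      intro a ha b hb
      rw [hnumloc t I hI a (hVt a ha), hnumloc t I hI b (hVt b hb),
        ← Finset.sum_sub_distrib]
      refine (norm_sum_le _ _).trans ?_
      rw [hKnum, Finset.sum_mul]
      refine Finset.sum_le_sum fun x _ => ?_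
      rw [← sub_smul, norm_smul, Real.norm_eq_abs]
      calc |ψ x a - ψ x b| * ‖g x‖ ≤ dist a b * ‖g x‖ :=
            mul_le_mul_of_nonneg_right (ψ_dist x a b) (norm_nonneg _)
        _ = ‖g x‖ * dist a b := mul_comm _ _
    have hS_lip : ∀ a ∈ V, ∀ b ∈ V, |S a - S b| ≤ KS * dist a b := by
      intro a ha b hb
      rw [hSloc t I hI a (hVt a ha), hSloc t I hI b (hVt b hb),
        ← Finset.sum_sub_distrib]
      refine (Finset.abs_sum_le_sum_abs _ _).trans ?_
      calc ∑ x ∈ I, |ψ x a - ψ x b| ≤ ∑ _x ∈ I, dist a b :=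
            Finset.sum_le_sum fun x _ => ψ_dist x a b
        _ = KS * dist a b := by rw [Finset.sum_const, nsmul_eq_mul, hKS]
    have hnum_bound : ∀ b ∈ V, ‖num b‖ ≤ B := by
      intro b hb
      rw [hnumloc t I hI b (hVt b hb)]
      refine (norm_sum_le _ _).trans (Finset.sum_le_sum fun x _ => ?_)
      rw [norm_smul, Real.norm_eq_abs, abs_of_nonneg (ψ_nonneg x b)]
      refine mul_le_mul_of_nonneg_right ?_ (norm_nonneg _)
      have h1 : ψ x b - ψ x y₀ ≤ dist b y₀ := (le_abs_self _).trans (ψ_dist x b y₀)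
      have h2 : dist b y₀ < 1 := mem_ball.mp hb.1.2
      linarith
    refine ⟨Real.toNNReal (c⁻¹ * Knum + c⁻¹ * c⁻¹ * KS * B), V,
      V_open.mem_nhds hy₀V, LipschitzOnWith.of_dist_le_mul fun a ha b hb => ?_⟩
    have hSa := hS_lb a ha
    have hSb := hS_lb b hb
    have hSa0 : 0 < S a := hc_pos.trans hSa
    have hSb0 : 0 < S b := hc_pos.trans hSb
    have split : (S a)⁻¹ • num a - (S b)⁻¹ • num b
        = (S a)⁻¹ • (num a - num b) + ((S a)⁻¹ - (S b)⁻¹) • num b := by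
      rw [smul_sub, sub_smul]
      abel
    have hinv : |(S a)⁻¹ - (S b)⁻¹| ≤ c⁻¹ * c⁻¹ * (KS * dist a b) := by
      have e1 : (S a)⁻¹ - (S b)⁻¹ = (S b - S a) / (S a * S b) := by
        field_simp
      rw [e1, abs_div, abs_of_pos (mul_pos hSa0 hSb0), div_le_iff₀ (mul_pos hSa0 hSb0)]
      have h1 : |S b - S a| ≤ KS * dist a b := by
        rw [abs_sub_comm]
        exact hS_lip a ha b hb
      have h2 : c * c ≤ S a * S b := by nlinarith
      have h3 : 0 ≤ KS * dist a b := mul_nonneg hKS0 dist_nonneg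
      have h4 : c⁻¹ * c⁻¹ * (KS * dist a b) * (c * c) = KS * dist a b := by
        field_simp
      nlinarith [mul_le_mul_of_nonneg_left h2
        (mul_nonneg (mul_nonneg (inv_nonneg.mpr hc_pos.le) (inv_nonneg.mpr hc_pos.le)) h3)]
    have main : dist ((S a)⁻¹ • num a) ((S b)⁻¹ • num b)
        ≤ (c⁻¹ * Knum + c⁻¹ * c⁻¹ * KS * B) * dist a b := by
      rw [dist_eq_norm, split]
      refine (norm_add_le _ _).trans ?_
      have t1 : ‖(S a)⁻¹ • (num a - num b)‖ ≤ c⁻¹ * (Knum * dist a b) := by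
        rw [norm_smul, Real.norm_eq_abs, abs_of_pos (inv_pos.mpr hSa0)]
        have hi : (S a)⁻¹ ≤ c⁻¹ := by
          apply inv_anti₀ hc_pos hSa.le
        exact mul_le_mul hi (hnum_lip a ha b hb) (norm_nonneg _) (inv_nonneg.mpr hc_pos.le)
      have t2 : ‖((S a)⁻¹ - (S b)⁻¹) • num b‖ ≤ c⁻¹ * c⁻¹ * (KS * dist a b) * B := by
        rw [norm_smul, Real.norm_eq_abs]
        exact mul_le_mul hinv (hnum_bound b hb) (norm_nonneg _)
          (mul_nonneg (mul_nonneg (inv_nonneg.mpr hc_pos.le) (inv_nonneg.mpr hc_pos.le))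
            (mul_nonneg hKS0 dist_nonneg))
      calc ‖(S a)⁻¹ • (num a - num b)‖ + ‖((S a)⁻¹ - (S b)⁻¹) • num b‖
          ≤ c⁻¹ * (Knum * dist a b) + c⁻¹ * c⁻¹ * (KS * dist a b) * B :=
            add_le_add t1 t2
        _ = (c⁻¹ * Knum + c⁻¹ * c⁻¹ * KS * B) * dist a b := by ring
    refine main.trans (mul_le_mul_of_nonneg_right ?_ dist_nonneg)
    rw [Real.coe_toNNReal _ (add_nonneg (mul_nonneg (inv_nonneg.mpr hc_pos.le) hKnum0)
      (mul_nonneg (mul_nonneg (mul_nonneg (inv_nonneg.mpr hc_pos.le)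
        (inv_nonneg.mpr hc_pos.le)) hKS0) hB0))]
  · -- approximation
    intro y
    obtain ⟨t, t_open, hyt, I, hI⟩ := key y
    have hS := hSloc t I hI y hyt
    have hnum := hnumloc t I hI y hyt
    have hSy := S_pos y
    have e1 : (S y)⁻¹ • num y - g y = (S y)⁻¹ • (∑ x ∈ I, ψ x y • (g x - g y)) := by
      have e3 : ∑ x ∈ I, ψ x y • (g x - g y) = num y - S y • g y := by
        rw [hnum, hS, Finset.sum_smul, ← Finset.sum_sub_distrib]
        exact Finset.sum_congr rfl fun x _ => smul_sub _ _ _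
      rw [e3, smul_sub, smul_smul, inv_mul_cancel₀ hSy.ne', one_smul]
    rw [e1, norm_smul, Real.norm_eq_abs, abs_of_pos (inv_pos.mpr hSy)]
    have hs : ‖∑ x ∈ I, ψ x y • (g x - g y)‖ ≤ ∑ x ∈ I, ψ x y * ε := by
      refine (norm_sum_le _ _).trans (Finset.sum_le_sum fun x _ => ?_)
      rw [norm_smul, Real.norm_eq_abs, abs_of_nonneg (ψ_nonneg x y)]
      rcases eq_or_ne (ψ x y) 0 with h0 | h0
      · simp [h0]
      · have hyvx : y ∈ v x := by
          by_contra hc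
          exact h0 (ψ_zero x y hc)
        have hmem : dist y x < rad x := mem_ball.mp (v_sub x hyvx)
        have hosc : ‖g x - g y‖ ≤ ε := by
          rw [norm_sub_rev]
          exact rad_osc x y hmem
        exact mul_le_mul_of_nonneg_left hosc (ψ_nonneg x y)
    calc (S y)⁻¹ * ‖∑ x ∈ I, ψ x y • (g x - g y)‖
        ≤ (S y)⁻¹ * ∑ x ∈ I, ψ x y * ε :=
          mul_le_mul_of_nonneg_left hs (inv_nonneg.mpr hSy.le)
      _ = (S y)⁻¹ * (S y * ε) := by rw [← Finset.sum_mul, ← hS]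
      _ = ε := by field_simp

end UCPCAux

/-- Given a function `f` and a sequence of continuous functions `h n`, there
exist bounded locally Lipschitz functions `F n` converging wherever `h n`
converges, preserving UCPC, and uniformly bounded on balls on whose doubles
`h n → f` pointwise and `f` is bounded. -/
theorem exists_locallyLipschitz_seq {Y Z : Type*}
    [MetricSpace Y] [NormedAddCommGroup Z] [NormedSpace ℝ Z]
    (f : Y → Z) (h : ℕ → Y → Z) (hcont : ∀ n, Continuous (h n)) :
    ∃ F : ℕ → Y → Z,
      (∀ n, ∃ M : ℝ, ∀ y, ‖F n y‖ ≤ M) ∧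
      (∀ n, LocallyLipschitz (F n)) ∧
      (∀ y, ∀ z : Z, Tendsto (fun n => h n y) atTop (nhds z) →
        Tendsto (fun n => F n y) atTop (nhds z)) ∧
      (UCPC h f → UCPC F f) ∧
      (∀ a : Y, ∀ r : ℝ≥0∞, 0 < r →
        (∀ y ∈ EMetric.ball a (2 * r), Tendsto (fun n => h n y) atTop (nhds (f y))) →
        (∃ M : ℝ, ∀ y ∈ EMetric.ball a (2 * r), ‖f y‖ ≤ M) →
        ∃ M : ℝ, ∀ n, ∀ y ∈ EMetric.ball a r, ‖F n y‖ ≤ M) := by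
  classical
  rcases isEmpty_or_nonempty Y with hY | hY
  · exact ⟨fun _ _ => 0, fun n => ⟨0, fun y => (IsEmpty.false y).elim⟩,
      fun n x => (IsEmpty.false x).elim,
      fun y => (IsEmpty.false y).elim,
      fun _ y₀ => (IsEmpty.false y₀).elim,
      fun a => (IsEmpty.false a).elim⟩
  choose G G_lip G_err using fun n : ℕ =>
    UCPCAux.exists_locallyLipschitz_approx (hcont n)
      (show (0 : ℝ) < 1 / (n + 1) by positivity)
  refine ⟨fun n y => UCPCAux.trunc (G n y) (UCPCAux.Lam h n y), ?_, ?_, ?_, ?_, ?_⟩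
  · -- each F n is bounded
    intro n
    exact ⟨1 + n, fun y =>
      (UCPCAux.norm_trunc_le (UCPCAux.Lam_nonneg h n y)).trans (UCPCAux.Lam_le h n y)⟩
  · -- each F n is locally Lipschitz
    intro n x
    obtain ⟨K, t, ht, hK⟩ := G_lip n x
    refine ⟨Real.toNNReal (2 * (K : ℝ) + (n : ℝ) ^ 2), t, ht,
      LipschitzOnWith.of_dist_le_mul fun a ha b hb => ?_⟩
    have hG : ‖G n a - G n b‖ ≤ (K : ℝ) * dist a b := by
      have := hK.dist_le_mul a ha b hb
      rwa [dist_eq_norm] at this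
    have hΛ : |UCPCAux.Lam h n a - UCPCAux.Lam h n b| ≤ (n : ℝ) ^ 2 * dist a b := by
      rw [abs_sub_le_iff]
      constructor
      · linarith [UCPCAux.Lam_lip h n a b]
      · have := UCPCAux.Lam_lip h n b a
        rw [dist_comm b a] at this
        linarith
    have h1 := UCPCAux.trunc_lipschitz (v := G n a) (w := G n b)
      (UCPCAux.Lam_nonneg h n a) (UCPCAux.Lam_nonneg h n b)
    have hcoe : ((Real.toNNReal (2 * (K : ℝ) + (n : ℝ) ^ 2) : ℝ≥0) : ℝ)
        = 2 * (K : ℝ) + (n : ℝ) ^ 2 :=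
      Real.coe_toNNReal _ (by positivity)
    rw [dist_eq_norm, hcoe]
    calc ‖UCPCAux.trunc (G n a) (UCPCAux.Lam h n a)
          - UCPCAux.trunc (G n b) (UCPCAux.Lam h n b)‖
        ≤ 2 * ‖G n a - G n b‖ + |UCPCAux.Lam h n a - UCPCAux.Lam h n b| := h1
      _ ≤ 2 * ((K : ℝ) * dist a b) + (n : ℝ) ^ 2 * dist a b := by
          have := mul_le_mul_of_nonneg_left hG (by norm_num : (0:ℝ) ≤ 2)
          linarith
      _ = (2 * (K : ℝ) + (n : ℝ) ^ 2) * dist a b := by ring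
  · -- pointwise convergence
    intro y z hz
    obtain ⟨N₂, hN₂⟩ := Metric.tendsto_atTop.mp hz 4⁻¹ (by norm_num)
    have hzs : ENNReal.ofReal (‖z‖ - 2⁻¹) ≤ UCPCAux.sigma h y := by
      have hC : ∀ k, N₂ ≤ k → Real.toNNReal (‖z‖ - 2⁻¹) ≤ ‖h k y‖₊ := by
        intro k hk
        rw [Real.toNNReal_le_iff_le_coe]
        have h1 : ‖h k y - z‖ < 4⁻¹ := by
          have := hN₂ k hk
          rwa [dist_eq_norm] at this
        have h2 := abs_norm_sub_norm_le (h k y) z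
        have h3 := (abs_le.mp h2).1
        simp only [coe_nnnorm]
        linarith
      simpa [ENNReal.ofReal] using UCPCAux.le_sigma hC
    obtain ⟨N₁, hN₁⟩ := exists_nat_ge ‖z‖
    have hev : ∀ᶠ n in atTop,
        UCPCAux.trunc (G n y) (UCPCAux.Lam h n y) = G n y := by
      filter_upwards [eventually_ge_atTop N₁, eventually_ge_atTop N₂,
        eventually_ge_atTop 3] with n h1 h2 h3
      apply UCPCAux.trunc_eq_self
      have hcast : (N₁ : ℝ) ≤ (n : ℝ) := by exact_mod_cast h1
      have hcap : max (‖z‖ - 2⁻¹) 0 ≤ UCPCAux.cap h n y :=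
        UCPCAux.cap_ge hzs (by linarith)
      have hΛ : 1 + max (‖z‖ - 2⁻¹) 0 ≤ UCPCAux.Lam h n y :=
        le_trans (add_le_add_right hcap 1) (UCPCAux.Lam_ge h n y)
      have e1 : ‖G n y - h n y‖ ≤ 1 / ((n : ℝ) + 1) := G_err n y
      have e2 : ‖h n y - z‖ < 4⁻¹ := by
        have := hN₂ n h2
        rwa [dist_eq_norm] at this
      have e3 : 1 / ((n : ℝ) + 1) ≤ 4⁻¹ := by
        have h4 : (4 : ℝ) ≤ (n : ℝ) + 1 := by
          have : (3 : ℝ) ≤ (n : ℝ) := by exact_mod_cast h3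
          linarith
        calc 1 / ((n : ℝ) + 1) ≤ 1 / 4 := by
              apply one_div_le_one_div_of_le <;> norm_num <;> linarith
          _ = 4⁻¹ := by norm_num
      have e4 : ‖G n y‖ ≤ ‖z‖ + 2⁻¹ := by
        have eq1 : (G n y - h n y) + (h n y - z) + z = G n y := by abel
        calc ‖G n y‖ = ‖(G n y - h n y) + (h n y - z) + z‖ := by rw [eq1]
          _ ≤ ‖(G n y - h n y) + (h n y - z)‖ + ‖z‖ := norm_add_le _ _
          _ ≤ ‖G n y - h n y‖ + ‖h n y - z‖ + ‖z‖ := by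
              linarith [norm_add_le (G n y - h n y) (h n y - z)]
          _ ≤ ‖z‖ + 2⁻¹ := by linarith
      rcases le_total (‖z‖ - 2⁻¹) 0 with hmz | hmz
      · rw [max_eq_right hmz] at hΛ
        linarith
      · rw [max_eq_left hmz] at hΛ
        linarith
    have hGlim : Tendsto (fun n => G n y) atTop (nhds z) := by
      rw [tendsto_iff_dist_tendsto_zero]
      refine squeeze_zero (g := fun n : ℕ => 1 / ((n : ℝ) + 1) + dist (h n y) z)
        (fun n => dist_nonneg) (fun n => ?_) ?_
      · exact dist_triangle (G n y) (h n y) z |>.trans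
          (add_le_add_left (by rw [dist_eq_norm]; exact G_err n y) _)
      · have hd : Tendsto (fun n : ℕ => dist (h n y) z) atTop (nhds 0) :=
          tendsto_iff_dist_tendsto_zero.mp hz
        have := tendsto_one_div_add_atTop_nhds_zero_nat.add hd
        simpa using this
    exact hGlim.congr' (hev.mono fun n hn => hn.symm)
  · -- UCPC is preserved
    intro hUC y₀ hy₀ ε hε
    set ε' : ℝ := min (ε / 2) 4⁻¹ with hε'def
    have hε'pos : 0 < ε' := lt_min (by linarith) (by norm_num)
    have hε'le : ε' ≤ 4⁻¹ := min_le_right _ _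
    have hε'le2 : ε' ≤ ε / 2 := min_le_left _ _
    obtain ⟨k₀, U, hU, hUb⟩ := hUC y₀ hy₀ ε' hε'pos
    obtain ⟨N₁, hN₁⟩ := exists_nat_ge ‖f y₀‖
    obtain ⟨N₂, hN₂⟩ := exists_nat_one_div_lt (show (0 : ℝ) < ε / 2 by linarith)
    refine ⟨max (max k₀ 3) (max N₁ N₂), U, hU, ?_⟩
    intro k hk y hy
    rw [ge_iff_le, max_le_iff, max_le_iff, max_le_iff] at hk
    obtain ⟨⟨hkk₀, hk3⟩, hkN₁, hkN₂⟩ := hk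
    have hbd : ∀ j, k₀ ≤ j → ‖h j y - f y₀‖ < ε' := fun j hj => hUb j hj y hy
    have hzs : ENNReal.ofReal (‖f y₀‖ - ε') ≤ UCPCAux.sigma h y := by
      have hC : ∀ j, k₀ ≤ j → Real.toNNReal (‖f y₀‖ - ε') ≤ ‖h j y‖₊ := by
        intro j hj
        rw [Real.toNNReal_le_iff_le_coe]
        have h2 := abs_norm_sub_norm_le (h j y) (f y₀)
        have h3 := (abs_le.mp h2).1
        have h4 := hbd j hj
        simp only [coe_nnnorm]
        linarith
      simpa [ENNReal.ofReal] using UCPCAux.le_sigma hC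
    have hcast : (N₁ : ℝ) ≤ (k : ℝ) := by exact_mod_cast hkN₁
    have hcap : max (‖f y₀‖ - ε') 0 ≤ UCPCAux.cap h k y :=
      UCPCAux.cap_ge hzs (by linarith)
    have hΛ : 1 + max (‖f y₀‖ - ε') 0 ≤ UCPCAux.Lam h k y :=
      le_trans (add_le_add_right hcap 1) (UCPCAux.Lam_ge h k y)
    have e1 : ‖G k y - h k y‖ ≤ 1 / ((k : ℝ) + 1) := G_err k y
    have e2 : ‖h k y - f y₀‖ < ε' := hbd k hkk₀
    have e3 : 1 / ((k : ℝ) + 1) ≤ 4⁻¹ := by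
      have h4 : (3 : ℝ) ≤ (k : ℝ) := by exact_mod_cast hk3
      rw [show (4 : ℝ)⁻¹ = 1 / 4 by norm_num]
      apply one_div_le_one_div_of_le
      · norm_num
      · linarith
    have e4 : ‖G k y‖ ≤ ‖f y₀‖ + ε' + 4⁻¹ := by
      have eq1 : (G k y - h k y) + (h k y - f y₀) + f y₀ = G k y := by abel
      calc ‖G k y‖ = ‖(G k y - h k y) + (h k y - f y₀) + f y₀‖ := by rw [eq1]
        _ ≤ ‖(G k y - h k y) + (h k y - f y₀)‖ + ‖f y₀‖ := norm_add_le _ _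
        _ ≤ ‖G k y - h k y‖ + ‖h k y - f y₀‖ + ‖f y₀‖ := by
            linarith [norm_add_le (G k y - h k y) (h k y - f y₀)]
        _ ≤ ‖f y₀‖ + ε' + 4⁻¹ := by linarith
    have htr : UCPCAux.trunc (G k y) (UCPCAux.Lam h k y) = G k y := by
      apply UCPCAux.trunc_eq_self
      rcases le_total (‖f y₀‖ - ε') 0 with hmz | hmz
      · rw [max_eq_right hmz] at hΛ
        linarith
      · rw [max_eq_left hmz] at hΛ
        linarith
    have e5 : 1 / ((k : ℝ) + 1) < ε / 2 := by
      have h4 : (N₂ : ℝ) ≤ (k : ℝ) := by exact_mod_cast hkN₂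
      calc 1 / ((k : ℝ) + 1) ≤ 1 / ((N₂ : ℝ) + 1) := by
            apply one_div_le_one_div_of_le
            · positivity
            · linarith
        _ < ε / 2 := hN₂
    show ‖UCPCAux.trunc (G k y) (UCPCAux.Lam h k y) - f y₀‖ < ε
    rw [htr]
    have eq2 : (G k y - h k y) + (h k y - f y₀) = G k y - f y₀ := by abel
    calc ‖G k y - f y₀‖ = ‖(G k y - h k y) + (h k y - f y₀)‖ := by rw [eq2]
      _ ≤ ‖G k y - h k y‖ + ‖h k y - f y₀‖ := norm_add_le _ _
      _ < 1 / ((k : ℝ) + 1) + ε' := by linarith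
      _ < ε := by linarith
  · -- uniform boundedness on balls
    intro a r hr hconv hbdd
    obtain ⟨M, hM⟩ := hbdd
    have h2r : (0 : ℝ≥0∞) < 2 * r := ENNReal.mul_pos (by norm_num) hr.ne'
    have haball : a ∈ EMetric.ball a (2 * r) := EMetric.mem_ball_self h2r
    have hM0 : 0 ≤ M := (norm_nonneg _).trans (hM a haball)
    have hcap : ∀ n : ℕ, ∀ y' ∈ EMetric.ball a (2 * r),
        UCPCAux.cap h n y' ≤ M + 1 := by
      intro n y' hy'
      obtain ⟨N, hN⟩ := Metric.tendsto_atTop.mp (hconv y' hy') 1 one_pos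
      have hσ : UCPCAux.sigma h y' ≤ ((Real.toNNReal (M + 1) : ℝ≥0) : ℝ≥0∞) := by
        apply UCPCAux.sigma_le (N := N)
        intro k hk
        rw [Real.le_toNNReal_iff_coe_le (by linarith)]
        have h1 : ‖h k y' - f y'‖ < 1 := by
          have := hN k hk
          rwa [dist_eq_norm] at this
        have h2 : ‖h k y'‖ - ‖f y'‖ ≤ ‖h k y' - f y'‖ := norm_sub_norm_le _ _
        have h3 := hM y' hy'
        simp only [coe_nnnorm]
        linarith
      have h4 : min (UCPCAux.sigma h y') ((n : ℕ) : ℝ≥0∞)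
          ≤ ((Real.toNNReal (M + 1) : ℝ≥0) : ℝ≥0∞) := (min_le_left _ _).trans hσ
      have h5 := ENNReal.toReal_mono ENNReal.coe_ne_top h4
      rw [ENNReal.coe_toReal, Real.coe_toNNReal _ (by linarith)] at h5
      exact h5
    obtain ⟨n₀', hn₀'⟩ := ENNReal.exists_inv_nat_lt hr.ne'
    set n₀ : ℕ := n₀' + 1 with hn₀def
    have hinv : ∀ n : ℕ, n₀ ≤ n → ENNReal.ofReal (1 / (n : ℝ)) ≤ r := by
      intro n hn
      have hnpos : 0 < n := lt_of_lt_of_le (Nat.succ_pos _) hn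
      have hnR : (0 : ℝ) < (n : ℝ) := by exact_mod_cast hnpos
      have e1 : ENNReal.ofReal (1 / (n : ℝ)) = ((n : ℕ) : ℝ≥0∞)⁻¹ := by
        rw [one_div, ENNReal.ofReal_inv_of_pos hnR, ENNReal.ofReal_natCast]
      rw [e1]
      have e2 : ((n₀' : ℕ) : ℝ≥0∞) ≤ ((n : ℕ) : ℝ≥0∞) := by
        exact_mod_cast le_trans (Nat.le_succ _) hn
      exact le_trans (ENNReal.inv_le_inv.mpr e2) hn₀'.le
    refine ⟨max ((n₀ : ℝ) + 1) (M + 2), ?_⟩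
    intro n y hy
    rcases lt_or_ge n n₀ with hn | hn
    · have h1 : ‖UCPCAux.trunc (G n y) (UCPCAux.Lam h n y)‖ ≤ 1 + n :=
        (UCPCAux.norm_trunc_le (UCPCAux.Lam_nonneg h n y)).trans (UCPCAux.Lam_le h n y)
      have h2 : (n : ℝ) + 1 ≤ (n₀ : ℝ) + 1 := by
        have : (n : ℝ) ≤ (n₀ : ℝ) := by exact_mod_cast hn.le
        linarith
      exact h1.trans (le_trans (by linarith) (le_max_left _ _))
    · have h1n : 1 ≤ n := le_trans (Nat.succ_le_succ (Nat.zero_le _)) hn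
      have hball : ∀ y', dist y y' ≤ 1 / (n : ℝ) → UCPCAux.cap h n y' ≤ M + 1 := by
        intro y' hd
        apply hcap n y'
        change edist y' a < 2 * r
        have e2 : edist y' y ≤ ENNReal.ofReal (1 / (n : ℝ)) := by
          rw [edist_dist, dist_comm]
          exact ENNReal.ofReal_le_ofReal hd
        have e3 : edist y' y ≤ r := e2.trans (hinv n hn)
        have e4 : edist y a < r := hy
        rcases eq_or_ne r ⊤ with rfl | rtop
        · simpa [lt_top_iff_ne_top] using (edist_lt_top y' a).ne
        · calc edist y' a ≤ edist y' y + edist y a := edist_triangle _ _ _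
            _ ≤ r + edist y a := add_le_add_left e3 _
            _ < r + r := ENNReal.add_lt_add_left rtop e4
            _ = 2 * r := (two_mul r).symm
      have hΛ : UCPCAux.Lam h n y ≤ 1 + (M + 1) :=
        UCPCAux.Lam_le_of_ball (by linarith) h1n hball
      have h1 : ‖UCPCAux.trunc (G n y) (UCPCAux.Lam h n y)‖ ≤ UCPCAux.Lam h n y :=
        UCPCAux.norm_trunc_le (UCPCAux.Lam_nonneg h n y)
      exact h1.trans (hΛ.trans (le_trans (by linarith) (le_max_right _ _)))
end

section
/- Let Y be a metric space, Z a normed linear space, h : Y → Z a continuous function and ε > 0. Then there exists a locally Lipschitz function f : Y → Z such that ‖f(y) − h(y)‖ ≤ ε for every y ∈ Y. Moreover, for every y ∈ Y, f(y) lies in the closed convex hull of the image h(Y); in particular, if h is bounded then f is bounded. -/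
open Filter Topology Metric Set

section helpers
variable {Y Z : Type*} [MetricSpace Y] [NormedAddCommGroup Z] [NormedSpace ℝ Z]

lemma llip_smul' {a : Y → ℝ} {g : Y → Z} (ha : LocallyLipschitz a) (hg : LocallyLipschitz g) :
    LocallyLipschitz (fun x => a x • g x) := by
  intro x
  obtain ⟨K₁, t₁, ht₁, h₁⟩ := ha x
  obtain ⟨K₂, t₂, ht₂, h₂⟩ := hg x
  set t : Set Y := t₁ ∩ t₂ ∩ Metric.ball x 1 with ht_def
  have hxt : x ∈ t := ⟨⟨mem_of_mem_nhds ht₁, mem_of_mem_nhds ht₂⟩, by simp⟩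
  have h₁' : ∀ p ∈ t, ∀ q ∈ t, dist (a p) (a q) ≤ K₁ * dist p q := fun p hp q hq =>
    lipschitzOnWith_iff_dist_le_mul.1 (h₁.mono (fun y hy => hy.1.1)) p hp q hq
  have h₂' : ∀ p ∈ t, ∀ q ∈ t, dist (g p) (g q) ≤ K₂ * dist p q := fun p hp q hq =>
    lipschitzOnWith_iff_dist_le_mul.1 (h₂.mono (fun y hy => hy.1.2)) p hp q hq
  have hA : ∀ p ∈ t, |a p| ≤ |a x| + K₁ * 2 := by
    intro p hp
    have h5 := h₁' p hp x hxt
    have hd : dist p x ≤ 2 := by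
      have := hp.2
      simp only [Metric.mem_ball] at this
      linarith
    have h6 : dist (a p) (a x) ≤ K₁ * 2 := h5.trans (by nlinarith [K₁.coe_nonneg])
    have h7 := abs_sub_abs_le_abs_sub (a p) (a x)
    rw [Real.dist_eq] at h6
    linarith
  have hB : ∀ p ∈ t, ‖g p‖ ≤ ‖g x‖ + K₂ * 2 := by
    intro p hp
    have h5 := h₂' p hp x hxt
    have hd : dist p x ≤ 2 := by
      have := hp.2
      simp only [Metric.mem_ball] at this
      linarith
    have h6 : dist (g p) (g x) ≤ K₂ * 2 := h5.trans (by nlinarith [K₂.coe_nonneg])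
    have h7 := norm_sub_norm_le (g p) (g x)
    rw [dist_eq_norm] at h6
    linarith
  set A : ℝ := |a x| + K₁ * 2
  set B : ℝ := ‖g x‖ + K₂ * 2
  have hA0 : 0 ≤ A := by positivity
  have hB0 : 0 ≤ B := by positivity
  refine ⟨Real.toNNReal (A * K₂ + K₁ * B), t, ?_, ?_⟩
  · exact inter_mem (inter_mem ht₁ ht₂) (Metric.ball_mem_nhds x one_pos)
  · rw [lipschitzOnWith_iff_dist_le_mul]
    intro p hp q hq
    have key : dist (a p • g p) (a q • g q) ≤ A * (K₂ * dist p q) + (K₁ * dist p q) * B := by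
      have e : a p • g p - a q • g q = a p • (g p - g q) + (a p - a q) • g q := by
        rw [smul_sub, sub_smul]; abel
      rw [dist_eq_norm, e]
      calc ‖a p • (g p - g q) + (a p - a q) • g q‖
          ≤ ‖a p • (g p - g q)‖ + ‖(a p - a q) • g q‖ := norm_add_le _ _
        _ = |a p| * ‖g p - g q‖ + |a p - a q| * ‖g q‖ := by
            rw [norm_smul, norm_smul, Real.norm_eq_abs, Real.norm_eq_abs]
        _ ≤ A * (K₂ * dist p q) + (K₁ * dist p q) * B := by
            have h1 := hA p hp
            have h2 := hB q hq
            have h3 : ‖g p - g q‖ ≤ K₂ * dist p q := by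
              rw [← dist_eq_norm]; exact h₂' p hp q hq
            have h4 : |a p - a q| ≤ K₁ * dist p q := by
              rw [← Real.dist_eq]; exact h₁' p hp q hq
            have hap : 0 ≤ |a p| := abs_nonneg _
            have hgq : 0 ≤ ‖g q‖ := norm_nonneg _
            nlinarith [dist_nonneg (x := p) (y := q), abs_nonneg (a p - a q), norm_nonneg (g p - g q)]
    calc dist (a p • g p) (a q • g q) ≤ A * (K₂ * dist p q) + (K₁ * dist p q) * B := key
      _ = (A * K₂ + K₁ * B) * dist p q := by ring
      _ ≤ (Real.toNNReal (A * K₂ + K₁ * B) : ℝ) * dist p q := by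
          have := Real.le_coe_toNNReal (A * K₂ + K₁ * B)
          exact mul_le_mul_of_nonneg_right this dist_nonneg

lemma lipschitzOnWith_inv_Ici {a : ℝ} (ha : 0 < a) :
    LipschitzOnWith (Real.toNNReal (a⁻¹ * a⁻¹)) (fun t : ℝ => t⁻¹) (Set.Ici a) := by
  rw [lipschitzOnWith_iff_dist_le_mul]
  intro x hx y hy
  have hx0 : 0 < x := lt_of_lt_of_le ha hx
  have hy0 : 0 < y := lt_of_lt_of_le ha hy
  rw [Real.dist_eq, Real.dist_eq]
  have e : x⁻¹ - y⁻¹ = (y - x) / (x * y) := by field_simp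
  rw [e, abs_div, abs_of_pos (by positivity : (0:ℝ) < x * y)]
  have h1 : a * a ≤ x * y := mul_le_mul hx hy ha.le hx0.le
  have h2 : |y - x| = |x - y| := abs_sub_comm _ _
  have hcoe : (Real.toNNReal (a⁻¹ * a⁻¹) : ℝ) = a⁻¹ * a⁻¹ := Real.coe_toNNReal _ (by positivity)
  rw [h2, hcoe]
  calc |x - y| / (x * y) ≤ |x - y| / (a * a) :=
        div_le_div_of_nonneg_left (abs_nonneg _) (by positivity) h1
    _ = a⁻¹ * a⁻¹ * |x - y| := by field_simp

lemma llip_inv {S : Y → ℝ} (hS : LocallyLipschitz S) {a : ℝ} (ha : 0 < a)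
    (hle : ∀ x, a ≤ S x) : LocallyLipschitz (fun x => (S x)⁻¹) := by
  intro x
  obtain ⟨K, t, ht, hK⟩ := hS x
  exact ⟨_, t, ht, (lipschitzOnWith_inv_Ici ha).comp hK (fun y _ => hle y)⟩

lemma llip_finset_sum {ι : Type*} (F : Finset ι) (f : ι → Y → Z)
    (hf : ∀ i ∈ F, LocallyLipschitz (f i)) :
    LocallyLipschitz (fun x => ∑ i ∈ F, f i x) := by
  classical
  induction F using Finset.induction_on with
  | empty => simpa using LocallyLipschitz.const (0 : Z)
  | insert i F' hi ih =>
    simp only [Finset.sum_insert hi]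
    exact (hf i (Finset.mem_insert_self i F')).add (ih fun j hj => hf j (Finset.mem_insert_of_mem hj))

end helpers

/-- A continuous vector-valued function on a metric space can be uniformly
approximated by a locally Lipschitz function whose values lie in the closed
convex hull of the image; in particular boundedness is preserved. -/
theorem exists_locallyLipschitz_approx {Y Z : Type*}
    [MetricSpace Y] [NormedAddCommGroup Z] [NormedSpace ℝ Z]
    (h : Y → Z) (hcont : Continuous h) (ε : ℝ) (hε : 0 < ε) :
    ∃ f : Y → Z, LocallyLipschitz f ∧
      (∀ y, ‖f y - h y‖ ≤ ε) ∧
      (∀ y, f y ∈ closure (convexHull ℝ (Set.range h))) ∧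
      ((∃ M : ℝ, ∀ y, ‖h y‖ ≤ M) → ∃ M : ℝ, ∀ y, ‖f y‖ ≤ M) := by
  classical
  -- the open cover
  set U : Y → Set Y := fun c => h ⁻¹' Metric.ball (h c) ε with hUdef
  have hUo : ∀ c, IsOpen (U c) := fun c => Metric.isOpen_ball.preimage hcont
  have hUc : ⋃ c, U c = Set.univ := by
    apply Set.eq_univ_of_forall
    intro x
    exact Set.mem_iUnion.2 ⟨x, by simp [U, hε]⟩
  obtain ⟨v, hvo, hvc, hvf, hvU⟩ := precise_refinement U hUo hUc
  -- the bump functions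
  set φ : Y → Y → ℝ := fun c =>
    if ((v c)ᶜ : Set Y).Nonempty then (fun x => Metric.infDist x (v c)ᶜ) else (fun _ => 1)
    with hφdef
  have φ_lip : ∀ c, LipschitzWith 1 (φ c) := by
    intro c
    by_cases hc : ((v c)ᶜ : Set Y).Nonempty
    · simpa [φ, hc] using Metric.lipschitz_infDist_pt ((v c)ᶜ : Set Y)
    · simpa [φ, hc] using (LipschitzWith.const (α := Y) (1 : ℝ)).weaken zero_le_one
  have φ_nonneg : ∀ c x, 0 ≤ φ c x := by
    intro c x
    by_cases hc : ((v c)ᶜ : Set Y).Nonempty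
    · simp [φ, hc, Metric.infDist_nonneg]
    · simp [φ, hc]
  have φ_pos : ∀ c x, x ∈ v c → 0 < φ c x := by
    intro c x hx
    by_cases hc : ((v c)ᶜ : Set Y).Nonempty
    · simp only [φ, if_pos hc]
      exact ((hvo c).isClosed_compl.notMem_iff_infDist_pos hc).1 (by simpa using hx)
    · simp [φ, hc]
  have φ_supp : ∀ c x, φ c x ≠ 0 → x ∈ v c := by
    intro c x hx
    by_cases hc : ((v c)ᶜ : Set Y).Nonempty
    · simp only [φ, if_pos hc] at hx
      by_contra hmem
      exact hx (Metric.infDist_zero_of_mem (by simpa using hmem))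
    · have : v c = Set.univ := by
        rw [← Set.compl_empty_iff]
        exact Set.not_nonempty_iff_eq_empty.1 hc
      simp [this]
  set s : Y → ℝ := fun x => ∑ᶠ c, φ c x with hsdef
  set g : Y → Z := fun x => ∑ᶠ c, φ c x • h c with hgdef
  set f : Y → Z := fun x => (s x)⁻¹ • g x with hfdef
  -- local description
  have key : ∀ x₀ : Y, ∃ (F : Finset Y) (t : Set Y), t ∈ 𝓝 x₀ ∧
      ∀ y ∈ t, (∀ c, φ c y ≠ 0 → c ∈ F) ∧
        s y = ∑ c ∈ F, φ c y ∧ g y = ∑ c ∈ F, φ c y • h c := by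
    intro x₀
    obtain ⟨t, ht, hfin⟩ := hvf x₀
    refine ⟨hfin.toFinset, t, ht, fun y hy => ?_⟩
    have hsub : ∀ c, φ c y ≠ 0 → c ∈ hfin.toFinset := by
      intro c hc
      rw [Set.Finite.mem_toFinset]
      exact ⟨y, φ_supp c y hc, hy⟩
    refine ⟨hsub, ?_, ?_⟩
    · exact finsum_eq_sum_of_support_subset _ (fun c hc => hsub c hc)
    · refine finsum_eq_sum_of_support_subset _ (fun c hc => ?_)
      apply hsub
      intro h0
      apply hc
      simp [Function.mem_support, h0]
  -- positivity of s
  have hs_pos : ∀ x, 0 < s x := by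
    intro x
    obtain ⟨F, t, ht, hloc⟩ := key x
    obtain ⟨hsub, hseq, -⟩ := hloc x (mem_of_mem_nhds ht)
    obtain ⟨c, hc⟩ : ∃ c, x ∈ v c := by
      have := hvc ▸ Set.mem_univ x
      simpa [Set.mem_iUnion] using (hvc.symm ▸ Set.mem_univ x : x ∈ ⋃ i, v i)
    have hcF : c ∈ F := hsub c (φ_pos c x hc).ne'
    rw [hseq]
    calc (0:ℝ) < φ c x := φ_pos c x hc
      _ ≤ ∑ c ∈ F, φ c x := Finset.single_le_sum (fun i _ => φ_nonneg i x) hcF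
  -- approximation property
  have happrox : ∀ y, ‖f y - h y‖ ≤ ε := by
    intro y
    obtain ⟨F, t, ht, hloc⟩ := key y
    obtain ⟨hsub, hseq, hgeq⟩ := hloc y (mem_of_mem_nhds ht)
    have hsy := hs_pos y
    have e1 : f y - h y = (s y)⁻¹ • (g y - s y • h y) := by
      rw [smul_sub, smul_smul, inv_mul_cancel₀ hsy.ne', one_smul]
    have e2 : g y - s y • h y = ∑ c ∈ F, φ c y • (h c - h y) := by
      rw [hgeq, hseq, Finset.sum_smul, ← Finset.sum_sub_distrib]
      congr 1; ext c; rw [smul_sub]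
    rw [e1, e2, norm_smul, Real.norm_eq_abs, abs_of_pos (inv_pos.2 hsy)]
    have hterm : ∀ c ∈ F, ‖φ c y • (h c - h y)‖ ≤ φ c y * ε := by
      intro c _
      rw [norm_smul, Real.norm_eq_abs, abs_of_nonneg (φ_nonneg c y)]
      by_cases h0 : φ c y = 0
      · simp [h0]
      · apply mul_le_mul_of_nonneg_left _ (φ_nonneg c y)
        have hyv : y ∈ v c := φ_supp c y h0
        have : y ∈ U c := hvU c hyv
        have : dist (h y) (h c) < ε := by simpa [U, Metric.mem_ball] using this
        calc ‖h c - h y‖ = dist (h c) (h y) := (dist_eq_norm _ _).symm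
          _ = dist (h y) (h c) := dist_comm _ _
          _ ≤ ε := this.le
    calc (s y)⁻¹ * ‖∑ c ∈ F, φ c y • (h c - h y)‖
        ≤ (s y)⁻¹ * ∑ c ∈ F, φ c y * ε := by
          apply mul_le_mul_of_nonneg_left _ (inv_pos.2 hsy).le
          exact (norm_sum_le _ _).trans (Finset.sum_le_sum hterm)
      _ = (s y)⁻¹ * (s y * ε) := by rw [← Finset.sum_mul, ← hseq]
      _ = ε := by field_simp
  -- convex hull membership
  have hconv : ∀ y, f y ∈ convexHull ℝ (Set.range h) := by
    intro y
    obtain ⟨F, t, ht, hloc⟩ := key y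
    obtain ⟨hsub, hseq, hgeq⟩ := hloc y (mem_of_mem_nhds ht)
    have : f y = F.centerMass (fun c => φ c y) h := by
      rw [Finset.centerMass, ← hseq, ← hgeq]
    rw [this]
    exact Finset.centerMass_mem_convexHull F (fun c _ => φ_nonneg c y)
      (by rw [← hseq]; exact hs_pos y) (fun c _ => Set.mem_range_self c)
  -- local Lipschitzness
  have hlip : LocallyLipschitz f := by
    intro x₀
    obtain ⟨F, t, ht, hloc⟩ := key x₀
    set a : ℝ := s x₀ / 2 with hadef
    have ha : 0 < a := half_pos (hs_pos x₀)
    set S : Y → ℝ := fun y => max (∑ c ∈ F, φ c y) a with hSdef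
    have hS_lip : LocallyLipschitz S :=
      ((llip_finset_sum (Z := ℝ) F (fun c y => φ c y)
        (fun c _ => (φ_lip c).locallyLipschitz)).max_const a)
    have hS_ge : ∀ y, a ≤ S y := fun y => le_max_right _ _
    have hG : LocallyLipschitz (fun y => ∑ c ∈ F, φ c y • h c) :=
      llip_finset_sum F (fun c y => φ c y • h c)
        (fun c _ => llip_smul' (φ_lip c).locallyLipschitz (LocallyLipschitz.const (h c)))
    have hfhat : LocallyLipschitz (fun y => (S y)⁻¹ • ∑ c ∈ F, φ c y • h c) :=
      llip_smul' (llip_inv hS_lip ha hS_ge) hG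
    -- neighborhood where f agrees with fhat
    have hcont_sum : Continuous (fun y => ∑ c ∈ F, φ c y) := by
      apply continuous_finset_sum
      exact fun c _ => (φ_lip c).continuous
    have hopen : IsOpen {y | a < ∑ c ∈ F, φ c y} := isOpen_lt continuous_const hcont_sum
    have hx₀mem : x₀ ∈ {y | a < ∑ c ∈ F, φ c y} := by
      obtain ⟨-, hseq, -⟩ := hloc x₀ (mem_of_mem_nhds ht)
      simp only [Set.mem_setOf_eq, ← hseq, hadef]
      linarith [hs_pos x₀]
    have ht' : t ∩ {y | a < ∑ c ∈ F, φ c y} ∈ 𝓝 x₀ :=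
      Filter.inter_mem ht (hopen.mem_nhds hx₀mem)
    have heq : ∀ y ∈ t ∩ {y | a < ∑ c ∈ F, φ c y},
        f y = (S y)⁻¹ • ∑ c ∈ F, φ c y • h c := by
      rintro y ⟨hyt, hya⟩
      obtain ⟨-, hseq, hgeq⟩ := hloc y hyt
      have hya' : a < ∑ c ∈ F, φ c y := hya
      have hSy : S y = s y := by
        rw [hseq]
        exact max_eq_left hya'.le
      show (s y)⁻¹ • g y = (S y)⁻¹ • ∑ c ∈ F, φ c y • h c
      rw [hSy, hgeq]
    obtain ⟨K, u, hu, hK⟩ := hfhat x₀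
    refine ⟨K, u ∩ (t ∩ {y | a < ∑ c ∈ F, φ c y}), Filter.inter_mem hu ht', ?_⟩
    intro p hp q hq
    show edist (f p) (f q) ≤ K * edist p q
    rw [heq p hp.2, heq q hq.2]
    exact hK hp.1 hq.1
  refine ⟨f, hlip, happrox, fun y => subset_closure (hconv y), ?_⟩
  rintro ⟨M, hM⟩
  refine ⟨max M 0, fun y => ?_⟩
  have hsub : Set.range h ⊆ Metric.closedBall (0:Z) (max M 0) := by
    rintro z ⟨c, rfl⟩
    rw [Metric.mem_closedBall, dist_zero_right]
    exact (hM c).trans (le_max_left _ _)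
  have : closure (convexHull ℝ (Set.range h)) ⊆ Metric.closedBall (0:Z) (max M 0) :=
    closure_minimal (convexHull_min hsub (convex_closedBall _ _)) Metric.isClosed_closedBall
  have hmem := this (subset_closure (hconv y))
  rwa [Metric.mem_closedBall, dist_zero_right] at hmem
end

section
/- Let Y be a metric space and let (O_n)_{n∈ℕ} be a sequence of open subsets of Y. For n ∈ ℕ define φ_n : Y → (0,∞] by φ_n(x) = (n+1) + 1/dist(x, Y \ O_n) if x ∈ O_n and φ_n(x) = ∞ if x ∈ Y \ O_n, and define r : Y → (0,∞] by r(x) = inf{φ_n(x) : n ∈ ℕ}. Then r is continuous as a function into the extended reals (0,∞] (equivalently, into [0,∞] with its standard topology). -/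
open Filter Topology ENNReal Classical

/-- Given open sets `O n` in a metric space, the function
`r x = ⨅ n, φ n x`, where `φ n x = (n+1) + 1/dist(x, (O n)ᶜ)` on `O n` and
`φ n x = ∞` off `O n`, is continuous as a map into `[0,∞]`. -/
theorem continuous_inf_of_penalty_functions {Y : Type*} [MetricSpace Y]
    (O : ℕ → Set Y) (hO : ∀ n, IsOpen (O n))
    (φ : ℕ → Y → ℝ≥0∞)
    (hφ : ∀ n x, φ n x =
      if x ∈ O n then ((n : ℝ≥0∞) + 1) + (EMetric.infEdist x (O n)ᶜ)⁻¹ else ⊤)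
    (r : Y → ℝ≥0∞) (hr : ∀ x, r x = ⨅ n, φ n x) :
    Continuous r := by
  -- φ n is globally given by the same formula
  have hφ' : ∀ n x, φ n x = ((n : ℝ≥0∞) + 1) + (EMetric.infEdist x (O n)ᶜ)⁻¹ := by
    intro n x
    rw [hφ]
    split_ifs with h
    · rfl
    · have h0 : EMetric.infEdist x (O n)ᶜ = 0 :=
        EMetric.infEdist_zero_of_mem (by simpa using h)
      rw [h0]
      simp
  have hcont : ∀ n, Continuous (φ n) := by
    intro n
    have : Continuous fun x : Y => ((n : ℝ≥0∞) + 1) + (EMetric.infEdist x (O n)ᶜ)⁻¹ :=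
      continuous_const.add (EMetric.continuous_infEdist (s := (O n)ᶜ)).inv
    exact this.congr fun x => (hφ' n x).symm
  have hge : ∀ (n : ℕ) (x : Y), ((n : ℝ≥0∞) + 1) ≤ φ n x := by
    intro n x
    rw [hφ']
    exact le_self_add
  rw [continuous_iff_lower_upperSemicontinuous]
  constructor
  · -- lower semicontinuity
    intro x t ht
    rw [hr] at ht
    have htt : t ≠ ⊤ := ht.ne_top
    obtain ⟨N, hN⟩ := ENNReal.exists_nat_gt htt
    have key : ∀ᶠ y in 𝓝 x, ∀ n ∈ Finset.range N, t < φ n y := by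
      rw [Filter.eventually_all_finset]
      intro n _
      have hlt : t < φ n x := lt_of_lt_of_le ht (iInf_le _ n)
      exact (hcont n).continuousAt (isOpen_Ioi.mem_nhds hlt)
    filter_upwards [key] with y hy
    rw [hr]
    have hNtop : t < ⊤ := lt_of_lt_of_le hN le_top
    set A : ℝ≥0∞ := (Finset.range N).inf fun n => φ n y with hA
    refine lt_of_lt_of_le (lt_min (b := A) ?_ hN) (le_iInf fun n => ?_)
    · exact (Finset.lt_inf_iff hNtop).2 hy
    · by_cases hn : n < N
      · exact min_le_of_left_le (Finset.inf_le (Finset.mem_range.2 hn))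
      · refine min_le_of_right_le ?_
        calc ((N : ℝ≥0∞)) ≤ (n : ℝ≥0∞) := by exact_mod_cast Nat.le_of_not_lt hn
          _ ≤ (n : ℝ≥0∞) + 1 := le_self_add
          _ ≤ φ n y := hge n y
  · -- upper semicontinuity
    have : UpperSemicontinuous fun x => ⨅ n, φ n x :=
      upperSemicontinuous_iInf fun n => (hcont n).upperSemicontinuous
    have hr' : r = fun x => ⨅ n, φ n x := funext hr
    rw [hr']
    exact this
end

section
/- Let (X,d) be a metric space, H ⊂ X a nonempty closed set, x' ∈ X \ H, a ∈ H with a ≠ x', and let x ∈ X satisfy d(x,x') < dist(x',H)/3. Then x ∉ H, and (1/4) · dist(x,H)/d(x,a) ≤ dist(x',H)/d(x',a) ≤ 4 · dist(x,H)/d(x,a). -/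
open Metric

/-- If `x` is close to `x'` (within a third of the distance of `x'` to the
closed set `H`), then `x ∉ H` and the non-tangentiality quotients at `x` and
`x'` relative to a point `a ∈ H` are comparable up to a factor `4`. -/
theorem nontangential_quotient_comparable {X : Type*} [MetricSpace X]
    (H : Set X) (hH : IsClosed H) (hne : H.Nonempty)
    (x' : X) (hx' : x' ∈ Hᶜ) (a : X) (ha : a ∈ H) (hax : a ≠ x')
    (x : X) (hx : dist x x' < infDist x' H / 3) :
    x ∉ H ∧
      (1 / 4) * (infDist x H / dist x a) ≤ infDist x' H / dist x' a ∧
      infDist x' H / dist x' a ≤ 4 * (infDist x H / dist x a) := by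
  have hD : 0 < infDist x' H := (hH.notMem_iff_infDist_pos hne).1 hx'
  have h1 : infDist x H ≤ infDist x' H + dist x x' := infDist_le_infDist_add_dist
  have h2 : infDist x' H ≤ infDist x H + dist x x' := by
    have := (infDist_le_infDist_add_dist : infDist x' H ≤ infDist x H + dist x' x)
    simpa [dist_comm] using this
  have hxa : infDist x H ≤ dist x a := infDist_le_dist_of_mem ha
  have hx'a : infDist x' H ≤ dist x' a := infDist_le_dist_of_mem ha
  have htri : dist x a ≤ dist x x' + dist x' a := dist_triangle x x' a
  have htri' : dist x' a ≤ dist x x' + dist x a := by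
    rw [dist_comm x x']; exact dist_triangle x' x a
  have hxH : 0 < infDist x H := by linarith
  have hxa0 : 0 < dist x a := lt_of_lt_of_le hxH hxa
  have hx'a0 : 0 < dist x' a := dist_pos.2 fun h => hax h.symm
  refine ⟨(hH.notMem_iff_infDist_pos hne).2 hxH, ?_, ?_⟩
  · have key : infDist x H / (4 * dist x a) ≤ infDist x' H / dist x' a := by
      rw [div_le_div_iff₀ (by linarith) hx'a0]
      nlinarith [mul_pos hD hxa0, mul_pos hD hx'a0, sq_nonneg (dist x x')]
    calc (1 / 4) * (infDist x H / dist x a) = infDist x H / (4 * dist x a) := by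
          field_simp
      _ ≤ _ := key
  · have key : infDist x' H / dist x' a ≤ (4 * infDist x H) / dist x a := by
      rw [div_le_div_iff₀ hx'a0 hxa0]
      nlinarith [mul_pos hD hxa0, mul_pos hD hx'a0, sq_nonneg (dist x x')]
    calc infDist x' H / dist x' a ≤ (4 * infDist x H) / dist x a := key
      _ = 4 * (infDist x H / dist x a) := by ring
end

section
/- Let (X,d) be a metric space, H ⊂ X a closed set with nonempty complement, Z a normed linear space, f : ∂H → Z a function, and g : (X \ H) → Z an arbitrary (not necessarily continuous) function. Then there exists a continuous function g̃ : (X \ H) → Z such that: (i) for every a ∈ ∂H, if lim_{x→a, x∈X\H} ‖g(x) − f(a)‖ · dist(x,H)/d(x,a) = 0 then lim_{x→a, x∈X\H} ‖g̃(x) − f(a)‖ · dist(x,H)/d(x,a) = 0; (ii) for every a ∈ ∂H, if lim_{x→a, x∈X\H} g(x) = f(a) then lim_{x→a, x∈X\H} g̃(x) = f(a); and (iii) for every a ∈ H and r ∈ (0,∞) ∪ {∞}, if g is bounded on B(a,2r) \ H then g̃ is bounded on B(a,r) \ H. -/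
open Filter Topology Metric ENNReal

/-- Any function `g` on the complement of a closed set `H` can be replaced by a
continuous one preserving the non-tangential limits, the limits, and the local
boundedness properties that `g` may have. -/
theorem exists_continuous_replacement {X Z : Type*} [MetricSpace X]
    [NormedAddCommGroup Z] [NormedSpace ℝ Z]
    (H : Set X) (hH : IsClosed H) (hcompl : Hᶜ.Nonempty)
    (f : frontier H → Z) (g : X → Z) :
    ∃ g' : X → Z, ContinuousOn g' Hᶜ ∧
      -- (i)
      (∀ a, ∀ ha : a ∈ frontier H,
        Tendsto (fun x => ‖g x - f ⟨a, ha⟩‖ * (infDist x H / dist x a))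
          (nhdsWithin a Hᶜ) (nhds 0) →
        Tendsto (fun x => ‖g' x - f ⟨a, ha⟩‖ * (infDist x H / dist x a))
          (nhdsWithin a Hᶜ) (nhds 0)) ∧
      -- (ii)
      (∀ a, ∀ ha : a ∈ frontier H,
        Tendsto g (nhdsWithin a Hᶜ) (nhds (f ⟨a, ha⟩)) →
        Tendsto g' (nhdsWithin a Hᶜ) (nhds (f ⟨a, ha⟩))) ∧
      -- (iii)
      (∀ a ∈ H, ∀ r : ℝ≥0∞, 0 < r →
        (∃ M : ℝ, ∀ x ∈ EMetric.ball a (2 * r) \ H, ‖g x‖ ≤ M) →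
        ∃ M : ℝ, ∀ x ∈ EMetric.ball a r \ H, ‖g' x‖ ≤ M) := by
  classical
  rcases H.eq_empty_or_nonempty with rfl | hne
  · exact ⟨0, continuousOn_const, fun a ha => by simp at ha, fun a ha => by simp at ha,
      fun a ha => by simp at ha⟩
  -- The radius of the Whitney-type ball around each point of `Hᶜ`.
  set rad : ↥(Hᶜ) → ℝ := fun i => infDist (i : X) H / 8 with hrad
  have hDpos : ∀ x : X, x ∈ Hᶜ → 0 < infDist x H := fun x hx =>
    (hH.notMem_iff_infDist_pos hne).mp hx
  have hradpos : ∀ i : ↥(Hᶜ), 0 < rad i := fun i => by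
    have := hDpos i i.2; simp only [hrad]; positivity
  -- partition of unity on the subtype `↥Hᶜ`
  obtain ⟨ρ, hρ⟩ := PartitionOfUnity.exists_isSubordinate (ι := ↥(Hᶜ)) (X := ↥(Hᶜ))
    isClosed_univ (fun i => Metric.ball i (rad i)) (fun i => isOpen_ball)
    (fun y _ => Set.mem_iUnion.2 ⟨y, mem_ball_self (hradpos y)⟩)
  set G : ↥(Hᶜ) → Z := fun y => ∑ᶠ i, ρ i y • g (i : X) with hG
  have hGcont : Continuous G :=
    ρ.continuous_finsum_smul fun i x _ => continuousAt_const
  -- the key convexity estimate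
  have key : ∀ (y : ↥(Hᶜ)) (c : Z) (B : ℝ),
      (∀ i : ↥(Hᶜ), dist (y : X) (i : X) < rad i → ‖g (i : X) - c‖ ≤ B) →
      ‖G y - c‖ ≤ B := by
    intro y c B hB
    have hmem : G y ∈ Metric.closedBall c B := by
      refine ρ.finsum_smul_mem_convex (g := fun i _ => g (i : X)) (Set.mem_univ y) ?_
        (convex_closedBall c B)
      intro i hi
      have h1 : y ∈ Metric.ball i (rad i) := hρ i (subset_tsupport _ hi)
      have h2 : dist (y : X) (i : X) < rad i := by
        rwa [Metric.mem_ball, Subtype.dist_eq] at h1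
      rw [Metric.mem_closedBall, dist_eq_norm]
      exact hB i h2
    rwa [Metric.mem_closedBall, dist_eq_norm] at hmem
  refine ⟨fun x => if h : x ∈ Hᶜ then G ⟨x, h⟩ else 0, ?_, ?_, ?_, ?_⟩
  · -- continuity
    rw [continuousOn_iff_continuous_restrict]
    refine hGcont.congr fun y => ?_
    simp [Set.restrict, y.2]
    exact fun h => absurd h y.2
  · -- (i)
    intro a ha htend
    have haH : a ∈ H := by
      have := frontier_subset_closure (s := H) ha; rwa [hH.closure_eq] at this
    rw [Metric.tendsto_nhdsWithin_nhds] at htend ⊢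
    intro ε hε
    obtain ⟨δ, hδ, hδ'⟩ := htend (ε / 2) (by positivity)
    refine ⟨δ / 2, by positivity, ?_⟩
    intro x hx hxa
    have hDx : 0 < infDist x H := hDpos x hx
    have hdxa : 0 < dist x a := dist_pos.2 (fun h => (h ▸ hx) haH)
    simp only [hx, dif_pos]
    have hbound : ‖G ⟨x, hx⟩ - f ⟨a, ha⟩‖ ≤
        ε / 2 * (9 / 7) * (dist x a / infDist x H) := by
      refine key _ _ _ ?_
      intro i hi
      have hDi : 0 < infDist (i : X) H := hDpos i i.2
      have h2 : infDist (i : X) H ≤ infDist x H + dist (i : X) x :=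
        infDist_le_infDist_add_dist
      have h2' : infDist x H ≤ infDist (i : X) H + dist x (i : X) :=
        infDist_le_infDist_add_dist
      have h3 : infDist x H ≤ dist x a := infDist_le_dist_of_mem haH
      have h4 : dist (i : X) a ≤ dist (i : X) (x : X) + dist x a := dist_triangle _ _ _
      have h5 : dist (i : X) (x : X) = dist (x : X) (i : X) := dist_comm _ _
      have hi' : dist (x : X) (i : X) < infDist (i : X) H / 8 := hi
      have hdia : dist (i : X) a < δ := by linarith
      have hdia0 : 0 < dist (i : X) a := dist_pos.2 (fun h => (h ▸ i.2) haH)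
      have hφ : ‖g (i : X) - f ⟨a, ha⟩‖ * (infDist (i : X) H / dist (i : X) a) < ε / 2 := by
        have := hδ' i.2 hdia
        rw [Real.dist_eq, sub_zero] at this
        exact lt_of_le_of_lt (le_abs_self _) this
      -- convert to a bound on ‖g i - f a‖
      have hgi : ‖g (i : X) - f ⟨a, ha⟩‖ * infDist (i : X) H < ε / 2 * dist (i : X) a := by
        rw [← mul_div_assoc] at hφ
        exact (div_lt_iff₀ hdia0).mp hφ
      -- infDist x H ≤ 9/8 * infDist i H, dist i a ≤ 8/7 * dist x a
      have hA : infDist x H ≤ 9 / 8 * infDist (i : X) H := by linarith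
      have hB : dist (i : X) a ≤ 8 / 7 * dist x a := by linarith
      rw [← mul_div_assoc, le_div_iff₀ hDx]
      nlinarith [mul_nonneg (norm_nonneg (g (i : X) - f ⟨a, ha⟩)) (sub_nonneg.2 hA),
        mul_nonneg hε.le (sub_nonneg.2 hB), norm_nonneg (g (i : X) - f ⟨a, ha⟩)]
    have hq : (0:ℝ) ≤ infDist x H / dist x a := by positivity
    have := mul_le_mul_of_nonneg_right hbound hq
    have heq : ε / 2 * (9 / 7) * (dist x a / infDist x H) * (infDist x H / dist x a)
        = 9 / 14 * ε := by
      field_simp; ring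
    rw [heq] at this
    rw [Real.dist_eq, sub_zero, abs_of_nonneg (by positivity)]
    linarith
  · -- (ii)
    intro a ha htend
    have haH : a ∈ H := by
      have := frontier_subset_closure (s := H) ha; rwa [hH.closure_eq] at this
    rw [Metric.tendsto_nhdsWithin_nhds] at htend ⊢
    intro ε hε
    obtain ⟨δ, hδ, hδ'⟩ := htend (ε / 2) (by positivity)
    refine ⟨δ / 2, by positivity, ?_⟩
    intro x hx hxa
    simp only [hx, dif_pos]
    rw [dist_eq_norm]
    have : ‖G ⟨x, hx⟩ - f ⟨a, ha⟩‖ ≤ ε / 2 := by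
      refine key _ _ _ ?_
      intro i hi
      have h2 : infDist (i : X) H ≤ infDist x H + dist (i : X) x :=
        infDist_le_infDist_add_dist
      have h3 : infDist x H ≤ dist x a := infDist_le_dist_of_mem haH
      have h4 : dist (i : X) a ≤ dist (i : X) (x : X) + dist x a := dist_triangle _ _ _
      have h5 : dist (i : X) (x : X) = dist (x : X) (i : X) := dist_comm _ _
      have hi' : dist (x : X) (i : X) < infDist (i : X) H / 8 := hi
      have hdia : dist (i : X) a < δ := by linarith
      have := hδ' i.2 hdia
      rw [dist_eq_norm] at this
      exact this.le
    linarith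
  · -- (iii)
    rintro a haH r hr ⟨M, hM⟩
    refine ⟨M, ?_⟩
    rintro x ⟨hx1, hx2⟩
    have hx2' : x ∈ Hᶜ := hx2
    simp only [hx2', dif_pos]
    have hb := key ⟨x, hx2'⟩ 0 M ?_
    · simpa using hb
    intro i hi
    rw [sub_zero]
    refine hM _ ⟨?_, i.2⟩
    have h2 : infDist (i : X) H ≤ infDist x H + dist (i : X) x :=
      infDist_le_infDist_add_dist
    have h3 : infDist x H ≤ dist x a := infDist_le_dist_of_mem haH
    have h4 : dist (i : X) a ≤ dist (i : X) (x : X) + dist x a := dist_triangle _ _ _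
    have h5 : dist (i : X) (x : X) = dist (x : X) (i : X) := dist_comm _ _
    have hi' : dist (x : X) (i : X) < infDist (i : X) H / 8 := hi
    have h6 : dist (i : X) a ≤ 2 * dist x a := by
      have := dist_nonneg (x := x) (y := a); linarith
    calc edist (i : X) a = ENNReal.ofReal (dist (i : X) a) := edist_dist _ _
      _ ≤ ENNReal.ofReal (2 * dist x a) := ENNReal.ofReal_le_ofReal h6
      _ = 2 * ENNReal.ofReal (dist x a) := by
          rw [ENNReal.ofReal_mul (by norm_num)]; norm_num
      _ = 2 * edist x a := by rw [edist_dist]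
      _ < 2 * r := by
          rw [ENNReal.mul_lt_mul_iff_right two_ne_zero ENNReal.ofNat_ne_top]
          exact EMetric.mem_ball.mp hx1
end

section
/- Let Y and Z be metric spaces with Z a normed linear space, and let h_n : Y → Z be a sequence of functions converging pointwise to f : Y → Z. Then the pair ({h_n}, f) has UCPC if and only if h_n converges continuously to f at every point y₀ ∈ Y at which f is continuous, i.e. for every such y₀ and every sequence (y_k) in Y with y_k → y₀ one has h_k(y_k) → f(y₀). -/
open Filter Topology

/-- For a pointwise convergent sequence, UCPC is equivalent to continuous
convergence at every continuity point of the limit. -/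
theorem UCPC_iff_continuous_convergence {Y Z : Type*}
    [MetricSpace Y] [NormedAddCommGroup Z] [NormedSpace ℝ Z]
    (h : ℕ → Y → Z) (f : Y → Z)
    (hconv : ∀ y, Tendsto (fun n => h n y) atTop (nhds (f y))) :
    UCPC h f ↔
      ∀ y₀, ContinuousAt f y₀ → ∀ y : ℕ → Y, Tendsto y atTop (nhds y₀) →
        Tendsto (fun k => h k (y k)) atTop (nhds (f y₀)) := by

  constructor
  · intro H y₀ hc y hy
    rw [Metric.tendsto_atTop]
    intro ε hε
    obtain ⟨k₀, U, hU, hB⟩ := H y₀ hc ε hε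
    have hev := hy.eventually_mem hU
    rw [eventually_atTop] at hev
    obtain ⟨N, hN⟩ := hev
    refine ⟨max k₀ N, fun n hn => ?_⟩
    rw [dist_eq_norm]
    exact hB n (le_trans (le_max_left _ _) hn) _ (hN n (le_trans (le_max_right _ _) hn))
  · intro H
    by_contra hUC
    unfold UCPC at hUC
    push_neg at hUC
    obtain ⟨y₀, hc, ε, hε, hfail⟩ := hUC
    have key : ∀ k₀ n : ℕ, ∃ k, k₀ ≤ k ∧ ∃ z, dist z y₀ < 1/(n+1) ∧ ε ≤ ‖h k z - f y₀‖ := by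
      intro k₀ n
      have hball : Metric.ball y₀ (1/(n+1)) ∈ nhds y₀ :=
        Metric.ball_mem_nhds _ (by positivity)
      obtain ⟨k, hk, z, hz, hbz⟩ := hfail k₀ _ hball
      exact ⟨k, hk, z, hz, hbz⟩
    choose K hK Zp hZ hZb using key
    let kk : ℕ → ℕ := fun n => Nat.rec (K 0 0) (fun n prev => K (prev+1) (n+1)) n
    have kk_succ : ∀ n, kk (n+1) = K (kk n + 1) (n+1) := fun n => rfl
    have kk_mono : StrictMono kk := strictMono_nat_of_lt_succ (fun n => by
      rw [kk_succ]; exact lt_of_lt_of_le (Nat.lt_succ_self _) (hK _ _))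
    let yy : ℕ → Y := fun n => Nat.rec (Zp 0 0) (fun n _ => Zp (kk n + 1) (n+1)) n
    have hyd : ∀ n, dist (yy n) y₀ < 1/(n+1) := by
      intro n
      cases n with
      | zero => exact hZ 0 0
      | succ n => exact hZ (kk n + 1) (n+1)
    have hyb : ∀ n, ε ≤ ‖h (kk n) (yy n) - f y₀‖ := by
      intro n
      cases n with
      | zero => exact hZb 0 0
      | succ n =>
        have := hZb (kk n + 1) (n+1)
        rw [← kk_succ] at this
        exact this
    classical
    let g : ℕ → Y := fun m => @dite Y (∃ n, kk n = m) (Classical.dec _) (fun hm => yy (Classical.choose hm)) (fun _ => y₀)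
    have hg_at : ∀ n, g (kk n) = yy n := by
      intro n
      have hm : ∃ n', kk n' = kk n := ⟨n, rfl⟩
      have hch : Classical.choose hm = n := kk_mono.injective (Classical.choose_spec hm)
      simp only [g, dif_pos hm, hch]
    have hgtend : Tendsto g atTop (nhds y₀) := by
      rw [Metric.tendsto_atTop]
      intro δ hδ
      obtain ⟨N, hN⟩ := exists_nat_one_div_lt hδ
      refine ⟨kk N, fun m hm => ?_⟩
      rcases Classical.em (∃ n, kk n = m) with hmm | hmm
      · have hspec := Classical.choose_spec hmm
        set n := Classical.choose hmm with hn
        have hnN : N ≤ n := by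
          by_contra hlt
          push_neg at hlt
          have := kk_mono hlt
          omega
        have hg : g m = yy n := by simp only [g, dif_pos hmm, ← hn]
        rw [hg]
        calc dist (yy n) y₀ < 1/(n+1) := hyd n
          _ ≤ 1/(N+1) := by
              apply one_div_le_one_div_of_le (by positivity)
              push_cast; exact_mod_cast Nat.succ_le_succ hnN
          _ < δ := hN
      · simp only [g, dif_neg hmm, dist_self]; exact hδ
    have hlim := H y₀ hc g hgtend
    rw [Metric.tendsto_atTop] at hlim
    obtain ⟨N, hN⟩ := hlim ε hε
    have hkN : N ≤ kk N := kk_mono.le_apply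
    have hcontra := hN (kk N) hkN
    rw [dist_eq_norm, hg_at] at hcontra
    exact absurd hcontra (not_lt.2 (hyb N))
end

section
/- Let Y be a metric space, Z a normed linear space, f : Y → Z a function, and h_n : Y → Z a sequence of continuous functions such that the pair ({h_n}, f) has UCPC and such that h_n(y) → f(y) for every y at which f is continuous. For n ∈ ℕ let P_n : Z → Z be the radial projection onto the closed ball of radius n, i.e. P_n(z) = z if ‖z‖ < n and P_n(z) = n·z/‖z‖ otherwise, and set h̃_n = P_n ∘ h_n. Then each h̃_n is continuous and bounded (with ‖h̃_n‖ ≤ n everywhere), h̃_n(y) → z whenever y ∈ Y, z ∈ Z and h_n(y) → z, and the pair ({h̃_n}, f) has UCPC. -/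
open Filter Topology

/-- Truncating a sequence of continuous functions with UCPC by the radial
projections `P n` onto the closed balls of radius `n` yields a sequence of
bounded continuous functions that still converges wherever the original one
does and still has UCPC. -/
theorem radial_truncation_preserves_UCPC {Y Z : Type*}
    [MetricSpace Y] [NormedAddCommGroup Z] [NormedSpace ℝ Z]
    (f : Y → Z) (h : ℕ → Y → Z) (hcont : ∀ n, Continuous (h n))
    (hUCPC : UCPC h f)
    (hconv : ∀ y, ContinuousAt f y → Tendsto (fun n => h n y) atTop (nhds (f y)))
    (P : ℕ → Z → Z)
    (hP : ∀ n z, P n z = if ‖z‖ < (n : ℝ) then z else ((n : ℝ) / ‖z‖) • z)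
    (h' : ℕ → Y → Z) (hh' : ∀ n y, h' n y = P n (h n y)) :
    (∀ n, Continuous (h' n)) ∧
    (∀ n y, ‖h' n y‖ ≤ (n : ℝ)) ∧
    (∀ y, ∀ z : Z, Tendsto (fun n => h n y) atTop (nhds z) →
      Tendsto (fun n => h' n y) atTop (nhds z)) ∧
    UCPC h' f := by
  -- Key fact: `P n` fixes vectors of norm `< n`.
  have hfix : ∀ (n : ℕ) z, ‖z‖ < (n : ℝ) → P n z = z := by
    intro n z hz
    rw [hP]; simp [hz]
  -- Continuity of `P n`.
  have hPcont : ∀ n, Continuous (P n) := by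
    intro n
    rcases Nat.eq_zero_or_pos n with rfl | hn
    · have : P 0 = fun _ => (0 : Z) := by
        funext z
        rw [hP]
        simp [not_lt.mpr (norm_nonneg z)]
      rw [this]; exact continuous_const
    · have hn' : (0 : ℝ) < n := by exact_mod_cast hn
      have : P n = fun z => ((n : ℝ) / max (n : ℝ) ‖z‖) • z := by
        funext z
        rw [hP]
        by_cases hz : ‖z‖ < (n : ℝ)
        · rw [if_pos hz, max_eq_left hz.le, div_self hn'.ne', one_smul]
        · rw [if_neg hz, max_eq_right (not_lt.mp hz)]
      rw [this]
      apply Continuous.smul _ continuous_id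
      apply Continuous.div continuous_const
        (continuous_const.max continuous_norm)
      intro z
      exact ne_of_gt (lt_max_of_lt_left hn')
  -- Norm bound.
  have hbound : ∀ n z, ‖P n z‖ ≤ (n : ℝ) := by
    intro n z
    rw [hP]
    by_cases hz : ‖z‖ < (n : ℝ)
    · rw [if_pos hz]; exact hz.le
    · rw [if_neg hz]
      push_neg at hz
      by_cases h0 : z = 0
      · simp only [h0, smul_zero, norm_zero]
        exact Nat.cast_nonneg n
      · have h0' : (0 : ℝ) < ‖z‖ := norm_pos_iff.mpr h0
        rw [norm_smul, Real.norm_eq_abs, abs_of_nonneg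
          (div_nonneg (Nat.cast_nonneg n) h0'.le), div_mul_cancel₀ _ h0'.ne']
  refine ⟨?_, ?_, ?_, ?_⟩
  · intro n
    have : h' n = fun y => P n (h n y) := funext (hh' n)
    rw [this]
    exact (hPcont n).comp (hcont n)
  · intro n y; rw [hh']; exact hbound n (h n y)
  · intro y z hz
    have hnorm : Tendsto (fun n => ‖h n y‖) atTop (nhds ‖z‖) :=
      (continuous_norm.tendsto z).comp hz
    have hev : ∀ᶠ n in atTop, h' n y = h n y := by
      have h1 : ∀ᶠ n in atTop, ‖h n y‖ < ‖z‖ + 1 :=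
        hnorm.eventually (eventually_lt_nhds (by linarith))
      have h2 : ∀ᶠ n : ℕ in atTop, ‖z‖ + 1 ≤ (n : ℝ) := by
        filter_upwards [eventually_ge_atTop ⌈‖z‖ + 1⌉₊] with n hn
        calc ‖z‖ + 1 ≤ (⌈‖z‖ + 1⌉₊ : ℝ) := Nat.le_ceil _
          _ ≤ (n : ℝ) := by exact_mod_cast hn
      filter_upwards [h1, h2] with n hn1 hn2
      rw [hh', hfix n _ (hn1.trans_le hn2)]
    exact Tendsto.congr' (Filter.EventuallyEq.symm hev) hz
  · intro y₀ hy₀ ε hε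
    obtain ⟨k₀, U, hU, hk⟩ := hUCPC y₀ hy₀ ε hε
    set N := max k₀ (⌈‖f y₀‖ + ε⌉₊ + 1) with hN
    refine ⟨N, U, hU, fun k hkN y hy => ?_⟩
    have hk₀ : k ≥ k₀ := le_trans (le_max_left _ _) hkN
    have hsmall : ‖h k y‖ < (k : ℝ) := by
      have h1 : ‖h k y - f y₀‖ < ε := hk k hk₀ y hy
      have h2 : ‖h k y‖ < ‖f y₀‖ + ε := by
        have := norm_sub_norm_le (h k y) (f y₀)
        linarith
      have h3 : ‖f y₀‖ + ε < (k : ℝ) := by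
        have : ⌈‖f y₀‖ + ε⌉₊ + 1 ≤ k := le_trans (le_max_right _ _) hkN
        calc ‖f y₀‖ + ε ≤ (⌈‖f y₀‖ + ε⌉₊ : ℝ) := Nat.le_ceil _
          _ < (⌈‖f y₀‖ + ε⌉₊ : ℝ) + 1 := by linarith
          _ ≤ (k : ℝ) := by exact_mod_cast this
      linarith
    rw [hh', hfix k _ hsmall]
    exact hk k hk₀ y hy
end
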